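/- arXiv:2512.15336 — 3 statements merged into one kernel-verified Lean document; each statement's English description precedes it below -/
import Mathlib

section
/- Let F : ℝ^m → ℝ and c₁,…,c_l : ℝ^m → ℝ (with l ≤ m) be C^k functions (k ≥ 1) satisfying F(0) = 0 and cᵢ(0) = 0 for i = 1,…,l. Assume there is a neighborhood N of 0 such that F(x) = 0 for every x ∈ N with c₁(x) = c₂(x) = ⋯ = c_l(x) = 0, and that the Jacobian matrix of (c₁,…,c_l) at x = 0 has full rank l. Then there exist a neighborhood N* ⊆ N of 0 and C^{k−1} functions F₁,…,F_l : N* → ℝ such that F(x) = Σ_{i=1}^{l} cᵢ(x)Fᵢ(x) for all x ∈ N*. Moreover, if in addition the gradient ∇F(0) = 0, then F₁(0) = F₂(0) = ⋯ = F_l(0) = 0. -/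
open scoped Topology BigOperators
open Set Asymptotics MeasureTheory intervalIntegral
open Filter

set_option synthInstance.maxHeartbeats 1000000
set_option maxHeartbeats 2000000

noncomputable section

/-- The planar vector field `Z = (f, g)` at parameter `α`. -/
def Zv {m : ℕ} (f g : ℝ → ℝ → (Fin m → ℝ) → ℝ) (α : Fin m → ℝ) (p : ℝ × ℝ) : ℝ × ℝ :=
  (f p.1 p.2 α, g p.1 p.2 α)

/-- `γ` is a solution of `(ẋ, ẏ) = Z(x, y; α)` on the time set `s`. -/
def IsSolOn {m : ℕ} (f g : ℝ → ℝ → (Fin m → ℝ) → ℝ) (α : Fin m → ℝ)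
    (γ : ℝ → ℝ × ℝ) (s : Set ℝ) : Prop :=
  ∀ t ∈ s, HasDerivAt γ (Zv f g α (γ t)) t

/-- Partial derivative in `x` of a function `h(x, y; α)`. -/
def pdX {m : ℕ} (h : ℝ → ℝ → (Fin m → ℝ) → ℝ) (x y : ℝ) (α : Fin m → ℝ) : ℝ :=
  deriv (fun x' => h x' y α) x

/-- Partial derivative in `y` of a function `h(x, y; α)`. -/
def pdY {m : ℕ} (h : ℝ → ℝ → (Fin m → ℝ) → ℝ) (x y : ℝ) (α : Fin m → ℝ) : ℝ :=
  deriv (fun y' => h x y' α) y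

/-- Second partial derivative in `x`. -/
def pdXX {m : ℕ} (h : ℝ → ℝ → (Fin m → ℝ) → ℝ) (x y : ℝ) (α : Fin m → ℝ) : ℝ :=
  deriv (fun x' => pdX h x' y α) x

/-- Partial derivative in the parameter direction `αᵢ`. -/
def pdA {m : ℕ} (h : ℝ → ℝ → (Fin m → ℝ) → ℝ) (i : Fin m) (x y : ℝ) (α : Fin m → ℝ) : ℝ :=
  fderiv ℝ (h x y) α (Pi.single i 1)

/-- Mixed partial derivative `∂²h/∂αᵢ∂x`. -/
def pdXA {m : ℕ} (h : ℝ → ℝ → (Fin m → ℝ) → ℝ) (i : Fin m) (x y : ℝ) (α : Fin m → ℝ) : ℝ :=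
  fderiv ℝ (fun α' => pdX h x y α') α (Pi.single i 1)

/-- Divergence `f_x + g_y` of the vector field `Z = (f, g)`. -/
def divZ {m : ℕ} (f g : ℝ → ℝ → (Fin m → ℝ) → ℝ) (α : Fin m → ℝ) (p : ℝ × ℝ) : ℝ :=
  pdX f p.1 p.2 α + pdY g p.1 p.2 α

/-- `λ(t) = exp (∫_t^T (f_x + g_y)(γ(s); 0) ds)` along a curve `γ`, at parameter `0`. -/
def lamF {m : ℕ} (f g : ℝ → ℝ → (Fin m → ℝ) → ℝ) (γ : ℝ → ℝ × ℝ) (T t : ℝ) : ℝ :=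
  Real.exp (∫ s in t..T, divZ f g 0 (γ s))

/-- `κᵢ = ∫_0^T λ(t) (f g_{αᵢ} − g f_{αᵢ})(γ(t); 0) dt`. -/
def kapF {m : ℕ} (f g : ℝ → ℝ → (Fin m → ℝ) → ℝ) (γ : ℝ → ℝ × ℝ) (T : ℝ) (i : Fin m) : ℝ :=
  ∫ t in (0:ℝ)..T, lamF f g γ T t *
    (f (γ t).1 (γ t).2 0 * pdA g i (γ t).1 (γ t).2 0
      - g (γ t).1 (γ t).2 0 * pdA f i (γ t).1 (γ t).2 0)

/-- Partial derivative in `x` of a transition map `σ(x, y; α)`. -/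
def sdX {m : ℕ} (σ : ℝ × ℝ → (Fin m → ℝ) → ℝ) (x y : ℝ) (α : Fin m → ℝ) : ℝ :=
  deriv (fun x' => σ (x', y) α) x

/-- Second partial derivative in `x` of a transition map. -/
def sdXX {m : ℕ} (σ : ℝ × ℝ → (Fin m → ℝ) → ℝ) (x y : ℝ) (α : Fin m → ℝ) : ℝ :=
  deriv (fun x' => sdX σ x' y α) x

/-- Partial derivative of a transition map in the parameter direction `αᵢ`. -/
def sdA {m : ℕ} (σ : ℝ × ℝ → (Fin m → ℝ) → ℝ) (i : Fin m) (x y : ℝ) (α : Fin m → ℝ) : ℝ :=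
  fderiv ℝ (σ (x, y)) α (Pi.single i 1)

/-- Mixed partial derivative `∂²σ/∂αᵢ∂x` of a transition map. -/
def sdXA {m : ℕ} (σ : ℝ × ℝ → (Fin m → ℝ) → ℝ) (i : Fin m) (x y : ℝ) (α : Fin m → ℝ) : ℝ :=
  fderiv ℝ (fun α' => sdX σ x y α') α (Pi.single i 1)

/-- The `Z₂`-symmetric sliding vector field numerator `f^s(x;α)`. -/
def fSlide {m : ℕ} (f g : ℝ → ℝ → (Fin m → ℝ) → ℝ) (x : ℝ) (α : Fin m → ℝ) : ℝ :=
  g x 0 α * f (-x) 0 α - g (-x) 0 α * f x 0 α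

/-- The map `𝒯₂(x;α) = σ⁺(x,0;α) − σ⁻(−x,0;α)`. -/
def T2map {m : ℕ} (σP σM : ℝ × ℝ → (Fin m → ℝ) → ℝ) (x : ℝ) (α : Fin m → ℝ) : ℝ :=
  σP (x, 0) α - σM (-x, 0) α

section AuxStatement0

variable {B : Type} [NormedAddCommGroup B] [NormedSpace ℝ B] [FiniteDimensional ℝ B]

theorem contDiff_paramIntegral :
    ∀ (n : ℕ) {G : Type} [NormedAddCommGroup G] [NormedSpace ℝ G] [CompleteSpace G]
      (g : ℝ × B → G), ContDiff ℝ n g →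
      ContDiff ℝ n (fun x => ∫ t in (0:ℝ)..1, g (t, x)) := by
  intro n
  induction n with
  | zero =>
    intro G _ _ _ g hg
    rw [Nat.cast_zero, contDiff_zero]
    exact intervalIntegral.continuous_parametric_intervalIntegral_of_continuous'
      (f := fun x t => g (t, x)) (hg.continuous.comp continuous_swap) 0 1
  | succ n ih =>
    intro G _ _ _ g hg
    have hgdiff : Differentiable ℝ g :=
      hg.differentiable (by exact_mod_cast Nat.succ_ne_zero n)
    set g' : ℝ × B → B →L[ℝ] G :=
      fun p => (fderiv ℝ g p).comp (ContinuousLinearMap.inr ℝ ℝ B) with hg'def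
    have hg' : ContDiff ℝ n g' :=
      (hg.fderiv_right (le_of_eq (by norm_cast))).clm_comp contDiff_const
    have key : ∀ x₀ : B, HasFDerivAt (fun x => ∫ t in (0:ℝ)..1, g (t, x))
        (∫ t in (0:ℝ)..1, g' (t, x₀)) x₀ := by
      intro x₀
      have hK : IsCompact ((uIcc (0:ℝ) 1) ×ˢ Metric.closedBall x₀ 1) :=
        isCompact_uIcc.prod (isCompact_closedBall x₀ 1)
      obtain ⟨C, hC⟩ := hK.exists_bound_of_continuousOn (hg'.continuous.continuousOn)
      apply intervalIntegral.hasFDerivAt_integral_of_dominated_of_fderiv_le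
        (F := fun x t => g (t, x)) (F' := fun x t => g' (t, x)) (bound := fun _ => C)
        (s := Metric.ball x₀ 1) (Metric.ball_mem_nhds x₀ one_pos)
      · filter_upwards with x
        exact (hg.continuous.comp (continuous_id.prodMk continuous_const)).aestronglyMeasurable
      · exact (hg.continuous.comp (continuous_id.prodMk continuous_const)).intervalIntegrable _ _
      · exact (hg'.continuous.comp (continuous_id.prodMk continuous_const)).aestronglyMeasurable
      · filter_upwards with t
        intro ht x hx
        exact hC (t, x) ⟨uIoc_subset_uIcc ht, Metric.ball_subset_closedBall hx⟩
      · exact intervalIntegrable_const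
      · filter_upwards with t
        intro ht x hx
        exact (hgdiff (t, x)).hasFDerivAt.comp x (hasFDerivAt_prodMk_right t x)
    have hcast : ((n + 1 : ℕ) : WithTop ℕ∞) = (n : WithTop ℕ∞) + 1 := by norm_cast
    rw [hcast, contDiff_succ_iff_fderiv]
    refine ⟨fun x => (key x).differentiableAt, by simp, ?_⟩
    have heq : (fderiv ℝ fun x => ∫ t in (0:ℝ)..1, g (t, x))
        = fun x => ∫ t in (0:ℝ)..1, g' (t, x) := funext fun x => (key x).fderiv
    rw [heq]
    exact ih g' hg'

theorem exists_bump_nhds {Y : Type} [NormedAddCommGroup Y] [NormedSpace ℝ Y]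
    [FiniteDimensional ℝ Y] {s : Set Y} (hs : s ∈ 𝓝 (0 : Y)) :
    ∃ φ : Y → ℝ, ContDiff ℝ ((⊤ : ℕ∞) : WithTop ℕ∞) φ ∧ tsupport φ ⊆ s ∧ φ =ᶠ[𝓝 (0:Y)] 1 := by
  obtain ⟨d, d_pos, hd⟩ := Euclidean.nhds_basis_closedBall.mem_iff.1 hs
  let c : ContDiffBump (toEuclidean (0 : Y)) :=
    ⟨d / 2, d, half_pos d_pos, half_lt_self d_pos⟩
  let φ : Y → ℝ := c ∘ toEuclidean
  have φ_supp : Function.support φ ⊆ Euclidean.ball (0 : Y) d := by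
    intro y hy
    have : toEuclidean y ∈ Function.support c := by
      simpa only [Function.mem_support, Function.comp_apply, Ne, φ] using hy
    rwa [c.support_eq] at this
  have φ_tsupp : tsupport φ ⊆ Euclidean.closedBall (0 : Y) d := by
    rw [tsupport, ← Euclidean.closure_ball _ d_pos.ne']
    exact closure_mono φ_supp
  refine ⟨φ, c.contDiff.comp (ContinuousLinearEquiv.contDiff _), φ_tsupp.trans hd, ?_⟩
  have h2 : Filter.Tendsto (⇑(toEuclidean (E := Y))) (𝓝 (0 : Y)) (𝓝 (toEuclidean (0 : Y))) :=
    (toEuclidean (E := Y)).continuous.continuousAt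
  have h1 := c.eventuallyEq_one.comp_tendsto h2
  filter_upwards [h1] with y hy
  simpa [φ] using hy

theorem hadamard_decomp {l : ℕ} {Y₂ : Type} [NormedAddCommGroup Y₂] [NormedSpace ℝ Y₂]
    (h : (Fin l → ℝ) × Y₂ → ℝ) (hh : Differentiable ℝ h)
    (hcont : Continuous (fderiv ℝ h)) (u : Fin l → ℝ) (v : Y₂) :
    h (u, v) = h (0, v)
      + ∑ i, u i * ∫ t in (0:ℝ)..1, fderiv ℝ h (t • u, v) (Pi.single i 1, 0) := by
  have hγ : ∀ t : ℝ, HasDerivAt (fun s : ℝ => ((s • u, v) : (Fin l → ℝ) × Y₂)) (u, 0) t := by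
    intro t
    have h1 : HasDerivAt (fun s : ℝ => s • u) u t := by
      simpa using (hasDerivAt_id t).smul_const u
    exact h1.prodMk (hasDerivAt_const t v)
  have hder : ∀ t : ℝ, HasDerivAt (fun s => h (s • u, v)) (fderiv ℝ h (t • u, v) (u, 0)) t :=
    fun t => (hh (t • u, v)).hasFDerivAt.comp_hasDerivAt t (hγ t)
  have hci : Continuous fun t : ℝ => fderiv ℝ h (t • u, v) := by
    apply hcont.comp
    exact (continuous_id.smul continuous_const).prodMk continuous_const
  have hFTC := intervalIntegral.integral_eq_sub_of_hasDerivAt (fun t _ => hder t)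
    ((hci.clm_apply continuous_const).intervalIntegrable 0 1)
  simp only [one_smul, zero_smul] at hFTC
  have husum : ((u, (0:Y₂)) : (Fin l → ℝ) × Y₂)
      = ∑ i, u i • (((Pi.single i 1 : Fin l → ℝ), (0:Y₂)) : (Fin l → ℝ) × Y₂) := by
    have h1 : (∑ i, u i • (Pi.single i 1 : Fin l → ℝ)) = u := by
      ext j
      rw [Finset.sum_apply]
      simp [Pi.single_apply, mul_ite]
    rw [Prod.ext_iff]
    constructor
    · rw [Prod.fst_sum]
      simpa using h1.symm
    · rw [Prod.snd_sum]
      simp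
  have hexp : ∀ t : ℝ, fderiv ℝ h (t • u, v) (u, 0)
      = ∑ i, u i * fderiv ℝ h (t • u, v) (Pi.single i 1, 0) := by
    intro t
    rw [husum, map_sum]
    refine Finset.sum_congr rfl fun i _ => ?_
    rw [ContinuousLinearMap.map_smul, smul_eq_mul]
  have hsum : (∫ t in (0:ℝ)..1, fderiv ℝ h (t • u, v) (u, 0))
      = ∑ i, u i * ∫ t in (0:ℝ)..1, fderiv ℝ h (t • u, v) (Pi.single i 1, 0) := by
    rw [intervalIntegral.integral_congr (g := fun t =>
      ∑ i, u i * fderiv ℝ h (t • u, v) (Pi.single i 1, 0)) (fun t _ => hexp t)]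
    rw [intervalIntegral.integral_finset_sum]
    · exact Finset.sum_congr rfl fun i _ => intervalIntegral.integral_const_mul _ _
    · intro i _
      exact (continuous_const.mul (hci.clm_apply continuous_const)).intervalIntegrable 0 1
  rw [← hsum, hFTC]
  ring


end AuxStatement0

/-- decomposition of functions vanishing on a common zero set.
If `F` and `c₁, …, c_l` are `C^k` (`k ≥ 1`) real functions on `ℝ^m` vanishing at `0`,
`F` vanishes on the common zero set of the `cᵢ` in a neighborhood `N` of `0`, and the
Jacobian of `(c₁, …, c_l)` at `0` has full rank `l`, then on a smaller neighborhood
`N* ⊆ N` one can write `F = Σᵢ cᵢ Fᵢ` with `Fᵢ` of class `C^{k−1}`; moreover if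
`∇F(0) = 0` then all `Fᵢ(0) = 0`. -/
theorem statement0
    (m l k : ℕ) (hlm : l ≤ m) (hk : 1 ≤ k)
    (F : (Fin m → ℝ) → ℝ) (c : Fin l → (Fin m → ℝ) → ℝ)
    (hF : ContDiff ℝ k F) (hc : ∀ i, ContDiff ℝ k (c i))
    (hF0 : F 0 = 0) (hc0 : ∀ i, c i 0 = 0)
    (N : Set (Fin m → ℝ)) (hN : N ∈ 𝓝 (0 : Fin m → ℝ))
    (hvanish : ∀ x ∈ N, (∀ i, c i x = 0) → F x = 0)
    (hrank : LinearIndependent ℝ (fun i : Fin l => fderiv ℝ (c i) 0)) :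
    ∃ Nstar ∈ 𝓝 (0 : Fin m → ℝ), Nstar ⊆ N ∧
      ∃ G : Fin l → (Fin m → ℝ) → ℝ,
        (∀ i, ContDiffOn ℝ (k - 1) (G i) Nstar) ∧
        (∀ x ∈ Nstar, F x = ∑ i, c i x * G i x) ∧
        (fderiv ℝ F 0 = 0 → ∀ i, G i 0 = 0) := by
  classical
  have hk1 : (1 : WithTop ℕ∞) ≤ (k : WithTop ℕ∞) := by exact_mod_cast hk
  have hk0 : (k : WithTop ℕ∞) ≠ 0 := by exact_mod_cast (by omega : k ≠ 0)
  set Dc : (Fin m → ℝ) →L[ℝ] (Fin l → ℝ) :=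
    ContinuousLinearMap.pi (fun i => fderiv ℝ (c i) 0) with hDc
  set Dl : (Fin m → ℝ) →ₗ[ℝ] (Fin l → ℝ) := (Dc : (Fin m → ℝ) →ₗ[ℝ] (Fin l → ℝ)) with hDl
  -- surjectivity of the Jacobian
  have hDs : Function.Surjective Dl := by
    by_contra hns
    have hlt : LinearMap.range Dl < ⊤ := by
      rcases lt_or_eq_of_le (le_top : LinearMap.range Dl ≤ ⊤) with hlt | heq
      · exact hlt
      · exact absurd (LinearMap.range_eq_top.1 heq) hns
    obtain ⟨φ, φne, hφ⟩ := Submodule.exists_dual_map_eq_bot_of_lt_top hlt inferInstance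
    have hphiD : ∀ x, φ (Dl x) = 0 := by
      intro x
      have hmem : φ (Dl x) ∈ Submodule.map φ (LinearMap.range Dl) :=
        Submodule.mem_map_of_mem (LinearMap.mem_range_self Dl x)
      rw [hφ] at hmem
      simpa using hmem
    have hsum0 : (∑ i, φ (Pi.single i 1) • fderiv ℝ (c i) 0) = 0 := by
      ext x
      have hx : (Dl x) = ∑ i, (Dl x i) • (Pi.single i 1 : Fin l → ℝ) := by
        ext j
        rw [Finset.sum_apply]
        simp [Pi.single_apply]
      have h0 := hphiD x
      rw [hx, map_sum] at h0
      simp only [_root_.map_smul, smul_eq_mul] at h0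
      have hDlx : ∀ i, Dl x i = fderiv ℝ (c i) 0 x := fun i => rfl
      simp only [hDlx] at h0
      simpa [ContinuousLinearMap.sum_apply, ContinuousLinearMap.smul_apply, smul_eq_mul,
        mul_comm] using h0
    have hazero : ∀ i, φ (Pi.single i 1) = 0 :=
      Fintype.linearIndependent_iff.1 hrank _ hsum0
    apply φne
    apply LinearMap.ext
    intro y
    have hy : y = ∑ i, y i • (Pi.single i 1 : Fin l → ℝ) := by
      ext j
      rw [Finset.sum_apply]
      simp [Pi.single_apply]
    rw [hy, map_sum]
    simp [hazero]
  -- complement and projection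
  obtain ⟨W, hW⟩ := Submodule.exists_isCompl (LinearMap.ker Dl)
  set prj : (Fin m → ℝ) →ₗ[ℝ] LinearMap.ker Dl :=
    Submodule.projectionOnto (LinearMap.ker Dl) W hW with hprj
  set prjL : (Fin m → ℝ) →L[ℝ] LinearMap.ker Dl := LinearMap.toContinuousLinearMap prj with hprjL
  set Φlin : (Fin m → ℝ) →ₗ[ℝ] (Fin l → ℝ) × LinearMap.ker Dl := Dl.prod prj with hΦlin
  have hbij : Function.Bijective Φlin := by
    constructor
    · rw [← LinearMap.ker_eq_bot (M := Fin m → ℝ)]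
      rw [Submodule.eq_bot_iff]
      intro x hx
      rw [LinearMap.mem_ker, hΦlin, LinearMap.prod_apply] at hx
      have h1 : Dl x = 0 := congrArg Prod.fst hx
      have h2 : prj x = 0 := congrArg Prod.snd hx
      have hmem : x ∈ LinearMap.ker Dl := LinearMap.mem_ker.2 h1
      have h3 := Submodule.projectionOnto_apply_left hW ⟨x, hmem⟩
      rw [hprj] at h2
      rw [h2] at h3
      exact (Subtype.ext_iff.1 h3.symm : x = 0)
    · rintro ⟨y, w⟩
      obtain ⟨x₀, hx₀⟩ := hDs y
      refine ⟨x₀ - (prj x₀ : Fin m → ℝ) + (w : Fin m → ℝ), ?_⟩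
      have hker1 : Dl ((prj x₀ : Fin m → ℝ)) = 0 := (prj x₀).2
      have hker2 : Dl ((w : Fin m → ℝ)) = 0 := w.2
      have hprj1 : prj ((prj x₀ : Fin m → ℝ)) = prj x₀ :=
        Submodule.projectionOnto_apply_left hW (prj x₀)
      have hprj2 : prj ((w : Fin m → ℝ)) = w :=
        Submodule.projectionOnto_apply_left hW w
      rw [hΦlin, LinearMap.prod_apply]
      apply Prod.ext
      · show Dl _ = y
        rw [map_add, map_sub, hker1, hker2, sub_zero, add_zero]
        exact hx₀
      · show prj _ = w
        rw [map_add, map_sub, hprj1, hprj2, sub_self, zero_add]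
  set Φcle := (LinearEquiv.ofBijective Φlin hbij).toContinuousLinearEquiv with hΦcle
  set Φ : (Fin m → ℝ) → (Fin l → ℝ) × LinearMap.ker Dl :=
    fun x => (fun i => c i x, prjL x) with hΦdef
  have hΦ : ContDiff ℝ k Φ := (contDiff_pi.2 fun i => hc i).prodMk prjL.contDiff
  have hΦ0 : Φ 0 = 0 := by
    have h1 : (fun i => c i (0 : Fin m → ℝ)) = (0 : Fin l → ℝ) := funext fun i => hc0 i
    rw [hΦdef]
    simp [h1]
  have hΦd : HasFDerivAt Φ (Φcle : (Fin m → ℝ) →L[ℝ] (Fin l → ℝ) × LinearMap.ker Dl) 0 := by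
    have h1 : HasFDerivAt (fun x => (fun i => c i x)) Dc 0 :=
      hasFDerivAt_pi.2 fun i => ((hc i).differentiable hk0 0).hasFDerivAt
    have h2 := h1.prodMk (prjL.hasFDerivAt (x := 0))
    exact h2
  have hstrict : HasStrictFDerivAt Φ
      (Φcle : (Fin m → ℝ) →L[ℝ] (Fin l → ℝ) × LinearMap.ker Dl) 0 :=
    hΦ.contDiffAt.hasStrictFDerivAt' hΦd hk0
  set ψ : (Fin l → ℝ) × LinearMap.ker Dl → (Fin m → ℝ) :=
    hstrict.localInverse Φ Φcle 0 with hψdef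
  have hψ0 : ψ 0 = 0 := by
    have h1 := hstrict.localInverse_apply_image
    rwa [hΦ0] at h1
  have hψcd : ContDiffAt ℝ k ψ 0 := by
    have h1 := hΦ.contDiffAt.to_localInverse (f' := Φcle) hΦd hk0
    rwa [hΦ0] at h1
  have hleft : ∀ᶠ x in 𝓝 (0 : Fin m → ℝ), ψ (Φ x) = x := hstrict.eventually_left_inverse
  have hright : ∀ᶠ y in 𝓝 (0 : (Fin l → ℝ) × LinearMap.ker Dl), Φ (ψ y) = y := by
    have h1 := hstrict.eventually_right_inverse
    rwa [hΦ0] at h1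
  have hFψ : ContDiffAt ℝ k (fun y => F (ψ y)) 0 := by
    have hF' : ContDiffAt ℝ k F (ψ 0) := by rw [hψ0]; exact hF.contDiffAt
    exact hF'.comp 0 hψcd
  obtain ⟨U, hUmem, hUcd⟩ := hFψ.contDiffOn le_rfl (by simp)
  obtain ⟨U', hU'sub, hU'open, hU'mem⟩ := mem_nhds_iff.1 hUmem
  obtain ⟨φb, φbs, φbsupp, φbone⟩ := exists_bump_nhds (hU'open.mem_nhds hU'mem)
  set h : (Fin l → ℝ) × LinearMap.ker Dl → ℝ := fun y => φb y * F (ψ y) with hhdef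
  have hφbk : ContDiff ℝ k φb := φbs.of_le (by exact_mod_cast (le_top : (k : ℕ∞) ≤ ⊤))
  have hh : ContDiff ℝ k h := by
    rw [contDiff_iff_contDiffAt]
    intro y
    by_cases hy : y ∈ U'
    · exact hφbk.contDiffAt.mul ((hUcd.mono hU'sub).contDiffAt (hU'open.mem_nhds hy))
    · have hy' : y ∉ tsupport φb := fun hmem => hy (φbsupp hmem)
      have hz : ∀ᶠ z in 𝓝 y, h z = 0 := by
        filter_upwards [(isClosed_tsupport φb).isOpen_compl.mem_nhds hy'] with z hzc
        simp [hhdef, image_eq_zero_of_notMem_tsupport hzc]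
      exact contDiffAt_const.congr_of_eventuallyEq hz
  have hfd : ContDiff ℝ (k - 1 : ℕ) (fderiv ℝ h) := by
    apply hh.fderiv_right
    have hkk : k - 1 + 1 = k := Nat.succ_pred_eq_of_pos hk
    exact le_of_eq (by exact_mod_cast congrArg (Nat.cast : ℕ → WithTop ℕ∞) hkk)
  have hW1 : ∀ᶠ y in 𝓝 (0 : (Fin l → ℝ) × LinearMap.ker Dl), φb y = 1 := by
    filter_upwards [φbone] with y hy
    simpa using hy
  have hψN : ∀ᶠ y in 𝓝 (0 : (Fin l → ℝ) × LinearMap.ker Dl), ψ y ∈ N := by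
    have hcψ : ContinuousAt ψ 0 := hψcd.continuousAt
    exact hcψ.preimage_mem_nhds (by rwa [hψ0])
  have hall : ∀ᶠ y in 𝓝 (0 : (Fin l → ℝ) × LinearMap.ker Dl),
      φb y = 1 ∧ Φ (ψ y) = y ∧ ψ y ∈ N := hW1.and (hright.and hψN)
  obtain ⟨r, hr, hball⟩ := Metric.eventually_nhds_iff_ball.1 hall
  set Nstar : Set (Fin m → ℝ) :=
    N ∩ Φ ⁻¹' (Metric.ball 0 r) ∩ {x | ψ (Φ x) = x} with hNstardef
  have hNstar_nhds : Nstar ∈ 𝓝 (0 : Fin m → ℝ) := by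
    apply Filter.inter_mem (Filter.inter_mem hN ?_) hleft
    apply hΦ.continuous.continuousAt.preimage_mem_nhds
    rw [hΦ0]
    exact Metric.ball_mem_nhds _ hr
  set G : Fin l → (Fin m → ℝ) → ℝ := fun i x =>
    ∫ t in (0:ℝ)..1, fderiv ℝ h (t • (Φ x).1, (Φ x).2) (Pi.single i 1, 0) with hGdef
  have hGsm : ∀ i, ContDiff ℝ (k - 1 : ℕ) (G i) := by
    intro i
    have hmap : ContDiff ℝ (k - 1 : ℕ) (fun p : ℝ × ((Fin l → ℝ) × LinearMap.ker Dl) =>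
        ((p.1 • p.2.1, p.2.2) : (Fin l → ℝ) × LinearMap.ker Dl)) :=
      (contDiff_fst.smul contDiff_snd.fst).prodMk contDiff_snd.snd
    have hgI : ContDiff ℝ (k - 1 : ℕ) (fun p : ℝ × ((Fin l → ℝ) × LinearMap.ker Dl) =>
        fderiv ℝ h (p.1 • p.2.1, p.2.2) (Pi.single i 1, 0)) :=
      (hfd.comp hmap).clm_apply contDiff_const
    have hint := contDiff_paramIntegral (k - 1) _ hgI
    have hΦ' : ContDiff ℝ (k - 1 : ℕ) Φ := hΦ.of_le (by exact_mod_cast Nat.sub_le k 1)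
    exact hint.comp hΦ'
  have hhq : ∀ (u : Fin l → ℝ) (v : LinearMap.ker Dl), h (u, v) = h (0, v)
      + ∑ i, u i * ∫ t in (0:ℝ)..1, fderiv ℝ h (t • u, v) (Pi.single i 1, 0) :=
    fun u v => hadamard_decomp h (hh.differentiable hk0) hfd.continuous u v
  refine ⟨Nstar, hNstar_nhds, fun x hx => hx.1.1, G, fun i => (hGsm i).contDiffOn, ?_, ?_⟩
  · intro x hx
    obtain ⟨⟨hxN, hxball⟩, hxleft⟩ := hx
    obtain ⟨hb1, _, _⟩ := hball _ hxball
    have hy0 : ((0 : Fin l → ℝ), (Φ x).2) ∈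
        Metric.ball (0 : (Fin l → ℝ) × LinearMap.ker Dl) r := by
      rw [Metric.mem_ball, dist_zero_right]
      have h1 : ‖(((0 : Fin l → ℝ), (Φ x).2) : (Fin l → ℝ) × LinearMap.ker Dl)‖ ≤ ‖Φ x‖ := by
        rw [Prod.norm_def, Prod.norm_def]
        simp only [norm_zero]
        exact max_le (le_max_of_le_left (norm_nonneg _)) (le_max_right _ _)
      have h2 : ‖Φ x‖ < r := by
        simpa [Metric.mem_ball, dist_zero_right] using hxball
      exact lt_of_le_of_lt h1 h2
    obtain ⟨_, hri0, hN0⟩ := hball _ hy0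
    have hcz : ∀ i, c i (ψ ((0 : Fin l → ℝ), (Φ x).2)) = 0 := by
      intro i
      have h1 := congrFun (congrArg Prod.fst hri0) i
      simpa [hΦdef] using h1
    have hFz : F (ψ ((0 : Fin l → ℝ), (Φ x).2)) = 0 := hvanish _ hN0 hcz
    have hv0 : h ((0 : Fin l → ℝ), (Φ x).2) = 0 := by
      rw [hhdef]
      simp [hFz]
    have hkey := hhq (Φ x).1 (Φ x).2
    rw [Prod.mk.eta] at hkey
    rw [hv0, zero_add] at hkey
    have hhx : h (Φ x) = F x := by
      rw [hhdef]
      simp only []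
      rw [hb1, hxleft, one_mul]
    rw [hhx] at hkey
    exact hkey
  · intro hF0' i
    have hμ : fderiv ℝ h 0 = 0 := by
      have hev : h =ᶠ[𝓝 (0 : (Fin l → ℝ) × LinearMap.ker Dl)] fun y => F (ψ y) := by
        filter_upwards [hW1] with y hy
        simp [hhdef, hy]
      have hcomp : HasFDerivAt (fun y => F (ψ y))
          ((fderiv ℝ F 0).comp (fderiv ℝ ψ 0)) 0 := by
        have hFat : HasFDerivAt F (fderiv ℝ F 0) (ψ 0) := by
          rw [hψ0]; exact (hF.differentiable hk0 0).hasFDerivAt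
        exact hFat.comp 0 ((hψcd.differentiableAt hk0).hasFDerivAt)
      rw [hev.fderiv_eq, hcomp.fderiv, hF0', ContinuousLinearMap.zero_comp]
    rw [hGdef]
    simp only [hΦ0]
    have h1 : (fun i => c i (0 : Fin m → ℝ)) = (0 : Fin l → ℝ) := funext fun j => hc0 j
    simp [h1, hμ, Prod.mk_zero_zero]
end
end

section
/- Assume (H0) and let σ⁺, τ⁺, σ⁻, τ⁻ be the transition maps to the section Π ⊂ {y = c}. Then for each i = 1,…,m the partial derivatives with respect to the parameter satisfy σ⁺_{αᵢ}(−a,0;0) = −κᵢ⁺/g⁺(b,c;0) and σ⁻_{αᵢ}(a,0;0) = −κᵢ⁻/g⁺(b,c;0). -/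
open scoped Topology BigOperators
open Set Asymptotics MeasureTheory intervalIntegral

noncomputable section

namespace Stmt2Aux

open Filter

/-- The parameterized planar field folded along the direction `e`. -/
noncomputable def PhiM {m : ℕ} (f g : ℝ → ℝ → (Fin m → ℝ) → ℝ) (e : Fin m → ℝ) :
    (ℝ × ℝ) × ℝ → ℝ × ℝ :=
  fun z => (f z.1.1 z.1.2 (z.2 • e), g z.1.1 z.1.2 (z.2 • e))

lemma contDiff_PhiM {m : ℕ} {f g : ℝ → ℝ → (Fin m → ℝ) → ℝ} (e : Fin m → ℝ)
    (hf : ContDiff ℝ 2 (fun q : ℝ × ℝ × (Fin m → ℝ) => f q.1 q.2.1 q.2.2))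
    (hg : ContDiff ℝ 2 (fun q : ℝ × ℝ × (Fin m → ℝ) => g q.1 q.2.1 q.2.2)) :
    ContDiff ℝ 2 (PhiM f g e) := by
  have h1 : ContDiff ℝ 2
      (fun z : (ℝ × ℝ) × ℝ => ((z.1.1, z.1.2, z.2 • e) : ℝ × ℝ × (Fin m → ℝ))) :=
    (contDiff_fst.fst).prodMk ((contDiff_fst.snd).prodMk (contDiff_snd.smul contDiff_const))
  exact (hf.comp h1).prodMk (hg.comp h1)

lemma PhiM_zero {m : ℕ} (f g : ℝ → ℝ → (Fin m → ℝ) → ℝ) (e : Fin m → ℝ) (p : ℝ × ℝ) :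
    PhiM f g e (p, 0) = Zv f g 0 p := by
  simp [PhiM, Zv]

section Conn

variable {m : ℕ} {f g : ℝ → ℝ → (Fin m → ℝ) → ℝ} {e : Fin m → ℝ}
variable (hf : ContDiff ℝ 2 (fun q : ℝ × ℝ × (Fin m → ℝ) => f q.1 q.2.1 q.2.2))
variable (hg : ContDiff ℝ 2 (fun q : ℝ × ℝ × (Fin m → ℝ) => g q.1 q.2.1 q.2.2))

include hf hg

lemma conn_hasFDerivAt (z : (ℝ × ℝ) × ℝ) :
    HasFDerivAt (PhiM f g e) (fderiv ℝ (PhiM f g e) z) z :=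
  (((contDiff_PhiM e hf hg).differentiable (by norm_num)) z).hasFDerivAt

lemma connX (x y : ℝ) :
    (fderiv ℝ (PhiM f g e) ((x, y), 0)) ((1, 0), 0) = (pdX f x y 0, pdX g x y 0) := by
  have hc : HasDerivAt (fun x' : ℝ => ((((x' : ℝ), y), (0:ℝ)) : (ℝ × ℝ) × ℝ))
      ((((1:ℝ), (0:ℝ)), (0:ℝ)) : (ℝ × ℝ) × ℝ) x :=
    ((hasDerivAt_id x).prodMk (hasDerivAt_const x y)).prodMk (hasDerivAt_const x 0)
  have h2 : HasDerivAt (fun x' => PhiM f g e ((x', y), 0))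
      ((fderiv ℝ (PhiM f g e) ((x, y), 0)) ((1, 0), 0)) x :=
    by have h := (conn_hasFDerivAt (e := e) hf hg (((x, y) : ℝ × ℝ), (0:ℝ))).comp_hasDerivAt x hc; exact h
  have h2f : HasDerivAt (fun x' => f x' y 0)
      ((fderiv ℝ (PhiM f g e) ((x, y), 0)) ((1, 0), 0)).1 x := by
    have h3 := (ContinuousLinearMap.fst ℝ ℝ ℝ).hasFDerivAt.comp_hasDerivAt x h2
    simpa [PhiM, Function.comp_def] using h3
  have h2g : HasDerivAt (fun x' => g x' y 0)
      ((fderiv ℝ (PhiM f g e) ((x, y), 0)) ((1, 0), 0)).2 x := by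
    have h3 := (ContinuousLinearMap.snd ℝ ℝ ℝ).hasFDerivAt.comp_hasDerivAt x h2
    simpa [PhiM, Function.comp_def] using h3
  exact Prod.ext (by simpa [pdX] using h2f.deriv.symm) (by simpa [pdX] using h2g.deriv.symm)

lemma connY (x y : ℝ) :
    (fderiv ℝ (PhiM f g e) ((x, y), 0)) ((0, 1), 0) = (pdY f x y 0, pdY g x y 0) := by
  have hc : HasDerivAt (fun y' : ℝ => (((x, (y' : ℝ)), (0:ℝ)) : (ℝ × ℝ) × ℝ))
      ((((0:ℝ), (1:ℝ)), (0:ℝ)) : (ℝ × ℝ) × ℝ) y :=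
    ((hasDerivAt_const y x).prodMk (hasDerivAt_id y)).prodMk (hasDerivAt_const y 0)
  have h2 : HasDerivAt (fun y' => PhiM f g e ((x, y'), 0))
      ((fderiv ℝ (PhiM f g e) ((x, y), 0)) ((0, 1), 0)) y :=
    by have h := (conn_hasFDerivAt (e := e) hf hg (((x, y) : ℝ × ℝ), (0:ℝ))).comp_hasDerivAt y hc; exact h
  have h2f : HasDerivAt (fun y' => f x y' 0)
      ((fderiv ℝ (PhiM f g e) ((x, y), 0)) ((0, 1), 0)).1 y := by
    have h3 := (ContinuousLinearMap.fst ℝ ℝ ℝ).hasFDerivAt.comp_hasDerivAt y h2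
    simpa [PhiM, Function.comp_def] using h3
  have h2g : HasDerivAt (fun y' => g x y' 0)
      ((fderiv ℝ (PhiM f g e) ((x, y), 0)) ((0, 1), 0)).2 y := by
    have h3 := (ContinuousLinearMap.snd ℝ ℝ ℝ).hasFDerivAt.comp_hasDerivAt y h2
    simpa [PhiM, Function.comp_def] using h3
  exact Prod.ext (by simpa [pdY] using h2f.deriv.symm) (by simpa [pdY] using h2g.deriv.symm)

lemma connA (x y : ℝ) :
    (fderiv ℝ (PhiM f g e) ((x, y), 0)) ((0, 0), 1)
      = (fderiv ℝ (f x y) 0 e, fderiv ℝ (g x y) 0 e) := by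
  have hc : HasDerivAt (fun s : ℝ => ((((x, y) : ℝ × ℝ), (s : ℝ)) : (ℝ × ℝ) × ℝ))
      ((((0:ℝ), (0:ℝ)), (1:ℝ)) : (ℝ × ℝ) × ℝ) 0 :=
    (hasDerivAt_const (0:ℝ) ((x, y) : ℝ × ℝ)).prodMk (hasDerivAt_id (0:ℝ))
  have h2 : HasDerivAt (fun s : ℝ => PhiM f g e ((x, y), s))
      ((fderiv ℝ (PhiM f g e) ((x, y), 0)) ((0, 0), 1)) 0 :=
    by have h := (conn_hasFDerivAt (e := e) hf hg (((x, y) : ℝ × ℝ), (0:ℝ))).comp_hasDerivAt 0 hc; exact h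
  have h5 : HasDerivAt (fun s : ℝ => s • e) e 0 := by
    simpa using (hasDerivAt_id (0:ℝ)).smul_const e
  have hffd : DifferentiableAt ℝ (f x y) 0 :=
    by have h := ((hf.differentiable (by norm_num)) (x, y, (0 : Fin m → ℝ))).comp (0 : Fin m → ℝ)
        (show DifferentiableAt ℝ (fun a : Fin m → ℝ => ((x, y, a) : ℝ × ℝ × (Fin m → ℝ))) 0 from
          (differentiableAt_const x).prodMk ((differentiableAt_const y).prodMk differentiableAt_id)); exact h
  have hgfd : DifferentiableAt ℝ (g x y) 0 :=
    by have h := ((hg.differentiable (by norm_num)) (x, y, (0 : Fin m → ℝ))).comp (0 : Fin m → ℝ)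
        (show DifferentiableAt ℝ (fun a : Fin m → ℝ => ((x, y, a) : ℝ × ℝ × (Fin m → ℝ))) 0 from
          (differentiableAt_const x).prodMk ((differentiableAt_const y).prodMk differentiableAt_id)); exact h
  have h2f : HasDerivAt (fun s : ℝ => f x y (s • e))
      ((fderiv ℝ (PhiM f g e) ((x, y), 0)) ((0, 0), 1)).1 0 := by
    have h3 := (ContinuousLinearMap.fst ℝ ℝ ℝ).hasFDerivAt.comp_hasDerivAt 0 h2
    simpa [PhiM, Function.comp_def] using h3
  have h2g : HasDerivAt (fun s : ℝ => g x y (s • e))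
      ((fderiv ℝ (PhiM f g e) ((x, y), 0)) ((0, 0), 1)).2 0 := by
    have h3 := (ContinuousLinearMap.snd ℝ ℝ ℝ).hasFDerivAt.comp_hasDerivAt 0 h2
    simpa [PhiM, Function.comp_def] using h3
  have h4f : HasDerivAt (fun s : ℝ => f x y (s • e)) (fderiv ℝ (f x y) 0 e) 0 := by
    have h6 : HasFDerivAt (f x y) (fderiv ℝ (f x y) 0) ((fun s : ℝ => s • e) 0) := by
      simpa using hffd.hasFDerivAt
    exact h6.comp_hasDerivAt 0 h5
  have h4g : HasDerivAt (fun s : ℝ => g x y (s • e)) (fderiv ℝ (g x y) 0 e) 0 := by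
    have h6 : HasFDerivAt (g x y) (fderiv ℝ (g x y) 0) ((fun s : ℝ => s • e) 0) := by
      simpa using hgfd.hasFDerivAt
    exact h6.comp_hasDerivAt 0 h5
  exact Prod.ext (h2f.unique h4f) (h2g.unique h4g)

end Conn

/-- second-order Taylor bound on a convex set. -/
lemma taylorAux {E F : Type*} [NormedAddCommGroup E] [NormedSpace ℝ E]
    [NormedAddCommGroup F] [NormedSpace ℝ F]
    {Φ : E → F} (hΦ : ContDiff ℝ 2 Φ) {U : Set E} (hU : Convex ℝ U) {M2 : ℝ}
    (hM : ∀ z ∈ U, ‖fderiv ℝ (fderiv ℝ Φ) z‖ ≤ M2) {z₀ z : E} (hz₀ : z₀ ∈ U) (hz : z ∈ U) :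
    ‖Φ z - Φ z₀ - fderiv ℝ Φ z₀ (z - z₀)‖ ≤ M2 * ‖z - z₀‖ ^ 2 := by
  have hM2nn : 0 ≤ M2 := le_trans (norm_nonneg (fderiv ℝ (fderiv ℝ Φ) z₀)) (hM z₀ hz₀)
  have hD1 : ContDiff ℝ 1 (fderiv ℝ Φ) := hΦ.fderiv_right (by norm_num)
  have hDdiff : ∀ w ∈ U, DifferentiableAt ℝ (fderiv ℝ Φ) w := fun w _ =>
    (hD1.differentiable one_ne_zero) w
  have hLip : ∀ w ∈ U, ‖fderiv ℝ Φ w - fderiv ℝ Φ z₀‖ ≤ M2 * ‖w - z₀‖ := fun w hw =>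
    Convex.norm_image_sub_le_of_norm_fderiv_le hDdiff hM hU hz₀ hw
  set G : E → F := fun w => Φ w - fderiv ℝ Φ z₀ w with hG
  have hseg : segment ℝ z₀ z ⊆ U := hU.segment_subset hz₀ hz
  have hGd : ∀ w ∈ segment ℝ z₀ z,
      HasFDerivWithinAt G (fderiv ℝ Φ w - fderiv ℝ Φ z₀) (segment ℝ z₀ z) w := by
    intro w _
    exact (((hΦ.differentiable (by norm_num)) w).hasFDerivAt.sub
      (fderiv ℝ Φ z₀).hasFDerivAt).hasFDerivWithinAt
  have hsegnorm : ∀ w ∈ segment ℝ z₀ z, ‖fderiv ℝ Φ w - fderiv ℝ Φ z₀‖ ≤ M2 * ‖z - z₀‖ := by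
    intro w hw
    refine (hLip w (hseg hw)).trans ?_
    have : ‖w - z₀‖ ≤ ‖z - z₀‖ := by
      obtain ⟨p, r, hp, hr, hpr, rfl⟩ := hw
      have : p • z₀ + r • z - z₀ = r • (z - z₀) := by
        have hp1 : p = 1 - r := by linarith
        rw [hp1]; module
      rw [this, norm_smul]
      have : ‖r‖ = r := by rw [Real.norm_eq_abs, abs_of_nonneg hr]
      rw [this]
      nlinarith [norm_nonneg (z - z₀)]
    nlinarith [norm_nonneg (w - z₀)]
  have hmain : ‖G z - G z₀‖ ≤ M2 * ‖z - z₀‖ * ‖z - z₀‖ :=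
    Convex.norm_image_sub_le_of_norm_hasFDerivWithin_le hGd hsegnorm
      (convex_segment _ _) (left_mem_segment ℝ z₀ z) (right_mem_segment ℝ z₀ z)
  have heq : G z - G z₀ = Φ z - Φ z₀ - fderiv ℝ Φ z₀ (z - z₀) := by
    simp only [hG, map_sub]
    abel
  rw [heq] at hmain
  calc ‖Φ z - Φ z₀ - fderiv ℝ Φ z₀ (z - z₀)‖ ≤ M2 * ‖z - z₀‖ * ‖z - z₀‖ := hmain
    _ = M2 * ‖z - z₀‖ ^ 2 := by ring

/-- Grönwall bound estimate. -/
lemma gronB {M1 τe : ℝ} (hM1 : 0 ≤ M1) (hτe : 0 ≤ τe) {ε x : ℝ} (hε : 0 ≤ ε)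
    (hx : x ∈ Set.Icc 0 τe) :
    gronwallBound 0 (M1.toNNReal : ℝ) ε x ≤ ε * (τe * Real.exp (M1 * τe)) := by
  have hK : ((M1.toNNReal : ℝ)) = M1 := Real.coe_toNNReal M1 hM1
  rw [hK]
  have hxτ : x ≤ τe := hx.2
  have hx0 : 0 ≤ x := hx.1
  have hexp1 : (1:ℝ) ≤ Real.exp (M1 * τe) := by
    rw [← Real.exp_zero]
    exact Real.exp_le_exp.mpr (by positivity)
  rcases eq_or_lt_of_le hM1 with h | h
  · rw [← h, gronwallBound_K0]
    simp only [zero_mul, Real.exp_zero]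
    nlinarith
  · rw [gronwallBound_of_K_ne_0 (ne_of_gt h)]
    simp only [zero_mul, zero_add]
    have h1 := Real.add_one_le_exp (-(M1 * x))
    have h2 : (-(M1 * x) + 1) * Real.exp (M1 * x) ≤ 1 := by
      have h3 := mul_le_mul_of_nonneg_right h1 (le_of_lt (Real.exp_pos (M1 * x)))
      rwa [← Real.exp_add, neg_add_cancel, Real.exp_zero] at h3
    have key : Real.exp (M1 * x) - 1 ≤ M1 * x * Real.exp (M1 * x) := by nlinarith
    have hmono : Real.exp (M1 * x) ≤ Real.exp (M1 * τe) :=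
      Real.exp_le_exp.mpr (by nlinarith)
    calc ε / M1 * (Real.exp (M1 * x) - 1) ≤ ε / M1 * (M1 * x * Real.exp (M1 * x)) := by
          apply mul_le_mul_of_nonneg_left key (by positivity)
      _ = ε * (x * Real.exp (M1 * x)) := by field_simp
      _ ≤ ε * (τe * Real.exp (M1 * τe)) := by
          apply mul_le_mul_of_nonneg_left _ hε
          have := Real.exp_pos (M1 * x)
          nlinarith

/-- time-reversal identity for the Melnikov integral. -/
lemma kapRev {m : ℕ} (f g : ℝ → ℝ → (Fin m → ℝ) → ℝ) (i : Fin m) (γ : ℝ → ℝ × ℝ) (τ0 T : ℝ) :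
    kapF (fun x y α => -f x y α) (fun x y α => -g x y α) (fun t => γ (τ0 - t)) (τ0 - T) i
      = -(kapF f g (fun t => γ (t + τ0)) (T - τ0) i) := by
  set B := τ0 - T with hB
  set Dv : ℝ × ℝ → ℝ := fun p => divZ f g 0 p with hDv
  set Ms : ℝ × ℝ → ℝ := fun p =>
    f p.1 p.2 0 * pdA g i p.1 p.2 0 - g p.1 p.2 0 * pdA f i p.1 p.2 0 with hMs
  have hdiv : ∀ p : ℝ × ℝ, divZ (fun x y α => -f x y α) (fun x y α => -g x y α) 0 p = -(Dv p) := by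
    intro p
    simp [divZ, pdX, pdY, hDv]
    ring
  have hint : ∀ p : ℝ × ℝ,
      (fun x y α => -f x y α) p.1 p.2 0 * pdA (fun x y α => -g x y α) i p.1 p.2 0
        - (fun x y α => -g x y α) p.1 p.2 0 * pdA (fun x y α => -f x y α) i p.1 p.2 0
        = Ms p := by
    intro p
    simp [pdA, hMs, fderiv_neg]
  have hL : kapF (fun x y α => -f x y α) (fun x y α => -g x y α) (fun t => γ (τ0 - t)) B i
      = ∫ t in (0:ℝ)..B, Real.exp (-(∫ u in t..B, Dv (γ (τ0 - u)))) * Ms (γ (τ0 - t)) := by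
    unfold kapF lamF
    apply intervalIntegral.integral_congr
    intro t _
    simp only
    rw [hint (γ (τ0 - t))]
    have hexp : (∫ u in t..B, divZ (fun x y α => -f x y α) (fun x y α => -g x y α) 0 (γ (τ0 - u)))
        = -(∫ u in t..B, Dv (γ (τ0 - u))) := by
      rw [show (∫ u in t..B, divZ (fun x y α => -f x y α) (fun x y α => -g x y α) 0 (γ (τ0 - u)))
          = ∫ u in t..B, -(Dv (γ (τ0 - u))) from intervalIntegral.integral_congr fun u _ => hdiv _]
      exact intervalIntegral.integral_neg
    rw [hexp]
  have hR : kapF f g (fun t => γ (t + τ0)) (-B) i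
      = -∫ x in (0:ℝ)..B, Real.exp (-(∫ u in x..B, Dv (γ (τ0 - u)))) * Ms (γ (τ0 - x)) := by
    have h0 : kapF f g (fun t => γ (t + τ0)) (-B) i
        = ∫ t in (0:ℝ)..(-B), Real.exp (∫ u in t..(-B), Dv (γ (u + τ0))) * Ms (γ (t + τ0)) := rfl
    rw [h0]
    have h1 : (∫ x in (0:ℝ)..B,
        Real.exp (∫ u in (-x)..(-B), Dv (γ (u + τ0))) * Ms (γ ((-x) + τ0)))
        = ∫ x in (-B)..(-(0:ℝ)), Real.exp (∫ u in x..(-B), Dv (γ (u + τ0))) * Ms (γ (x + τ0)) :=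
      intervalIntegral.integral_comp_neg
        (fun x => Real.exp (∫ u in x..(-B), Dv (γ (u + τ0))) * Ms (γ (x + τ0)))
    have h2 : (∫ t in (0:ℝ)..(-B), Real.exp (∫ u in t..(-B), Dv (γ (u + τ0))) * Ms (γ (t + τ0)))
        = -∫ t in (-B)..(-(0:ℝ)), Real.exp (∫ u in t..(-B), Dv (γ (u + τ0))) * Ms (γ (t + τ0)) := by
      rw [neg_zero]
      rw [intervalIntegral.integral_symm]
    rw [h2, ← h1]
    congr 1
    apply intervalIntegral.integral_congr
    intro x _
    have h3 : (∫ u in x..B, Dv (γ ((-u) + τ0))) = ∫ u in (-B)..(-x), Dv (γ (u + τ0)) :=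
      intervalIntegral.integral_comp_neg (fun u => Dv (γ (u + τ0)))
    have h3' : (∫ u in x..B, Dv (γ (τ0 - u))) = ∫ u in (-B)..(-x), Dv (γ (u + τ0)) := by
      rw [← h3]
      apply intervalIntegral.integral_congr
      intro u _
      congr 1
      ring
    have h4 : (∫ u in (-x)..(-B), Dv (γ (u + τ0)))
        = -∫ u in x..B, Dv (γ (τ0 - u)) := by
      rw [h3']
      exact intervalIntegral.integral_symm _ _
    simp only
    rw [h4]
    rw [show -x + τ0 = τ0 - x by ring]
  rw [show T - τ0 = -B by rw [hB]; ring] 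
  rw [hL, hR, neg_neg]

set_option maxHeartbeats 2000000 in
/-- The master lemma. -/
theorem masterLem {m : ℕ} (f g : ℝ → ℝ → (Fin m → ℝ) → ℝ) (i : Fin m)
    (hf : ContDiff ℝ 2 (fun q : ℝ × ℝ × (Fin m → ℝ) => f q.1 q.2.1 q.2.2))
    (hg : ContDiff ℝ 2 (fun q : ℝ × ℝ × (Fin m → ℝ) => g q.1 q.2.1 q.2.2))
    (τe T0 : ℝ) (hT0 : 0 < T0) (hTe : T0 < τe)
    (γ : ℝ → ℝ × ℝ) (hγ : IsSolOn f g 0 γ (Set.Icc 0 τe))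
    (b c : ℝ) (hbc : γ T0 = (b, c)) (hq : g b c 0 ≠ 0)
    (Tf Sf : ℝ → ℝ) (hTf0 : Tf 0 = T0) (hSf0 : Sf 0 = b)
    (hTd : DifferentiableAt ℝ Tf 0) (hSd : DifferentiableAt ℝ Sf 0)
    (hsol : ∀ᶠ s in 𝓝 (0:ℝ), ∃ X : ℝ → ℝ × ℝ,
      IsSolOn f g (s • Pi.single i 1) X (Set.Icc 0 (Tf s)) ∧ X 0 = γ 0 ∧
        X (Tf s) = (Sf s, c)) :
    deriv Sf 0 = -(kapF f g γ T0 i) / g b c 0 := by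
  classical
  set e : Fin m → ℝ := Pi.single i 1 with he
  set Φ : (ℝ × ℝ) × ℝ → ℝ × ℝ := PhiM f g e with hΦdef
  have hΦ : ContDiff ℝ 2 Φ := contDiff_PhiM e hf hg
  have hΦdiff : Differentiable ℝ Φ := hΦ.differentiable (by norm_num)
  have hτe : (0:ℝ) < τe := lt_trans hT0 hTe
  have hT0mem : T0 ∈ Set.Icc (0:ℝ) τe := ⟨le_of_lt hT0, le_of_lt hTe⟩
  have hγc : ContinuousOn γ (Set.Icc 0 τe) := fun t ht => ((hγ t ht).continuousAt).continuousWithinAt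
  have hγder : ∀ t ∈ Set.Icc (0:ℝ) τe, HasDerivAt γ (Φ (γ t, 0)) t := by
    intro t ht
    have h1 := hγ t ht
    rwa [← PhiM_zero f g e (γ t)] at h1
  -- compact tube and bounds
  set Cs : Set (ℝ × ℝ) := γ '' (Set.Icc 0 τe) with hCs
  have hCcomp : IsCompact Cs := isCompact_Icc.image_of_continuousOn hγc
  set KK : Set ((ℝ × ℝ) × ℝ) := (Metric.cthickening 1 Cs) ×ˢ (Set.Icc (-1:ℝ) 1) with hKK
  have hKKcomp : IsCompact KK := (hCcomp.cthickening).prod isCompact_Icc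
  have hγmem : ∀ t ∈ Set.Icc (0:ℝ) τe, γ t ∈ Cs := fun t ht => Set.mem_image_of_mem γ ht
  have hKKmem : ∀ t ∈ Set.Icc (0:ℝ) τe, ∀ s' ∈ Set.Icc (-1:ℝ) 1,
      ((γ t, s') : (ℝ × ℝ) × ℝ) ∈ KK := by
    intro t ht s' hs'
    exact ⟨Metric.closedBall_subset_cthickening (hγmem t ht) 1
      (Metric.mem_closedBall_self (by norm_num)), hs'⟩
  have hballKK : ∀ t ∈ Set.Icc (0:ℝ) τe,
      Metric.closedBall ((γ t, 0) : (ℝ × ℝ) × ℝ) 1 ⊆ KK := by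
    intro t ht z hz
    rw [Metric.mem_closedBall, Prod.dist_eq] at hz
    refine ⟨Metric.closedBall_subset_cthickening (hγmem t ht) 1
      (Metric.mem_closedBall.mpr (le_trans (le_max_left _ _) hz)), ?_⟩
    have h2 : dist z.2 (0:ℝ) ≤ 1 := le_trans (le_max_right _ _) hz
    rw [Real.dist_0_eq_abs] at h2
    exact abs_le.mp h2
  have hD1' : ContDiff ℝ 1 (fderiv ℝ Φ) := hΦ.fderiv_right (m := 1) (by norm_num)
  have hD1c : Continuous (fderiv ℝ Φ) := hD1'.continuous
  have hD2c : Continuous (fderiv ℝ (fderiv ℝ Φ)) :=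
    (hD1'.fderiv_right (m := 0) (by norm_num)).continuous
  obtain ⟨M0, hM0⟩ := hKKcomp.exists_bound_of_continuousOn hΦ.continuous.continuousOn
  obtain ⟨M1, hM1⟩ := hKKcomp.exists_bound_of_continuousOn hD1c.continuousOn
  obtain ⟨M2, hM2⟩ := hKKcomp.exists_bound_of_continuousOn (f := fderiv ℝ (fderiv ℝ Φ)) hD2c.continuousOn
  have hKKne : ((γ 0, 0) : (ℝ × ℝ) × ℝ) ∈ KK :=
    hKKmem 0 ⟨le_refl 0, le_of_lt hτe⟩ 0 (by norm_num)
  have hM0nn : 0 ≤ M0 := le_trans (norm_nonneg _) (hM0 _ hKKne)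
  have hM1nn : 0 ≤ M1 := le_trans (norm_nonneg _) (hM1 _ hKKne)
  have hM2nn : 0 ≤ M2 := le_trans (norm_nonneg _) (hM2 _ hKKne)
  have hfderiv_bound : ∀ z : (ℝ × ℝ) × ℝ, z ∈ KK →
      ∀ v : (ℝ × ℝ) × ℝ, ‖fderiv ℝ Φ z v‖ ≤ M1 * ‖v‖ := fun z hz v =>
    le_trans (ContinuousLinearMap.le_opNorm _ v)
      (mul_le_mul_of_nonneg_right (hM1 z hz) (norm_nonneg v))
  -- Taylor estimate
  have hTay : ∀ t ∈ Set.Icc (0:ℝ) τe, ∀ z ∈ Metric.closedBall ((γ t, 0) : (ℝ × ℝ) × ℝ) 1,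
      ‖Φ z - Φ (γ t, 0) - fderiv ℝ Φ (γ t, 0) (z - (γ t, 0))‖ ≤ M2 * ‖z - (γ t, 0)‖ ^ 2 := by
    intro t ht z hz
    exact taylorAux hΦ (convex_closedBall _ _) (fun w hw => hM2 w (hballKK t ht hw))
      (Metric.mem_closedBall_self (by norm_num)) hz
  -- clamped curve
  set pr : ℝ → ℝ := fun t => max 0 (min t τe) with hpr
  have hprc : Continuous pr := continuous_const.max (continuous_id.min continuous_const)
  have hprI : ∀ t, pr t ∈ Set.Icc (0:ℝ) τe := fun t =>
    ⟨le_max_left _ _, max_le (le_of_lt hτe) (min_le_right _ _)⟩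
  have hpr_eq : ∀ t ∈ Set.Icc (0:ℝ) τe, pr t = t := by
    intro t ht
    rw [hpr]
    simp only
    rw [min_eq_left ht.2, max_eq_right ht.1]
  set γp : ℝ → ℝ × ℝ := fun t => γ (pr t) with hγp
  have hγpc : Continuous γp := hγc.comp_continuous hprc hprI
  have hγp_eq : ∀ t ∈ Set.Icc (0:ℝ) τe, γp t = γ t := by
    intro t ht
    rw [hγp]
    simp only
    rw [hpr_eq t ht]
  -- uniform Lipschitz property of the frozen fields on the tube
  have hLipOn : ∀ s' ∈ Set.Icc (-1:ℝ) 1, ∀ t : ℝ,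
      LipschitzOnWith M1.toNNReal (fun p : ℝ × ℝ => Φ (p, s')) (Metric.closedBall (γp t) 1) := by
    intro s' hs' t
    apply LipschitzOnWith.of_dist_le_mul
    intro p hp p' hp'
    rw [dist_eq_norm, dist_eq_norm, Real.coe_toNNReal M1 hM1nn]
    have hd : ∀ w ∈ Metric.closedBall (γp t) 1,
        DifferentiableAt ℝ (fun p : ℝ × ℝ => Φ (p, s')) w := fun w _ =>
      by have h := (hΦdiff (w, s')).comp w (show DifferentiableAt ℝ (fun p : ℝ × ℝ => ((p, s') : (ℝ × ℝ) × ℝ)) w from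
          differentiableAt_id.prodMk (differentiableAt_const s')); exact h
    have hb : ∀ w ∈ Metric.closedBall (γp t) 1,
        ‖fderiv ℝ (fun p : ℝ × ℝ => Φ (p, s')) w‖ ≤ M1 := by
      intro w hw
      have hKKp : ((w, s') : (ℝ × ℝ) × ℝ) ∈ KK :=
        ⟨Metric.closedBall_subset_cthickening (hγmem (pr t) (hprI t)) 1 hw, hs'⟩
      have hcomp : HasFDerivAt (fun p : ℝ × ℝ => Φ (p, s'))
          ((fderiv ℝ Φ (w, s')).comp
            ((ContinuousLinearMap.id ℝ (ℝ × ℝ)).prod 0)) w :=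
        by have h := (hΦdiff (w, s')).hasFDerivAt.comp w ((hasFDerivAt_id (𝕜 := ℝ) w).prodMk (hasFDerivAt_const s' w)); exact h
      rw [hcomp.fderiv]
      refine le_trans (ContinuousLinearMap.opNorm_comp_le _ _) ?_
      have h1 : ‖(ContinuousLinearMap.id ℝ (ℝ × ℝ)).prod (0 : (ℝ × ℝ) →L[ℝ] ℝ)‖ ≤ 1 := by
        apply ContinuousLinearMap.opNorm_le_bound _ zero_le_one
        intro v
        rw [one_mul]
        simp only [ContinuousLinearMap.prod_apply, ContinuousLinearMap.coe_id', id_eq,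
          ContinuousLinearMap.zero_apply, Prod.norm_def, norm_zero]
        exact sup_le le_rfl (norm_nonneg v)
      calc ‖fderiv ℝ Φ (w, s')‖ * ‖(ContinuousLinearMap.id ℝ (ℝ × ℝ)).prod (0 : (ℝ × ℝ) →L[ℝ] ℝ)‖
          ≤ M1 * 1 := mul_le_mul (hM1 _ hKKp) h1 (norm_nonneg _) hM1nn
        _ = M1 := mul_one M1
    exact Convex.norm_image_sub_le_of_norm_fderiv_le hd hb (convex_closedBall _ _) hp' hp
  -- error of γ as an approximate trajectory of the perturbed field
  have hγerr : ∀ s' ∈ Set.Icc (-1:ℝ) 1, ∀ t ∈ Set.Icc (0:ℝ) τe,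
      ‖Φ (γ t, 0) - Φ (γ t, s')‖ ≤ M1 * |s'| := by
    intro s' hs' t ht
    have hcur : ∀ σ ∈ Set.Icc (-1:ℝ) 1, HasDerivWithinAt (fun σ' : ℝ => Φ (γ t, σ'))
        (fderiv ℝ Φ (γ t, σ) (0, 1)) (Set.Icc (-1:ℝ) 1) σ := by
      intro σ hσ
      have h1 : HasDerivAt (fun σ' : ℝ => ((γ t, σ') : (ℝ × ℝ) × ℝ)) (((0 : ℝ × ℝ)), (1:ℝ)) σ :=
        (hasDerivAt_const σ (γ t)).prodMk (hasDerivAt_id σ)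
      exact ((hΦdiff (γ t, σ)).hasFDerivAt.comp_hasDerivAt σ h1).hasDerivWithinAt
    have hbnd : ∀ σ ∈ Set.Icc (-1:ℝ) 1, ‖fderiv ℝ Φ (γ t, σ) (0, 1)‖ ≤ M1 := by
      intro σ hσ
      refine le_trans (hfderiv_bound _ (hKKmem t ht σ hσ) _) ?_
      have h2 : ‖(((0 : ℝ × ℝ)), (1:ℝ))‖ = 1 := by
        rw [Prod.norm_def]
        simp
      rw [h2, mul_one]
    have h0m : (0:ℝ) ∈ Set.Icc (-1:ℝ) 1 := by norm_num
    have h3 := Convex.norm_image_sub_le_of_norm_hasDerivWithin_le hcur hbnd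
      (convex_Icc _ _) hs' h0m
    simpa using h3
  -- Gronwall constant
  set B0 : ℝ := M1 * (τe * Real.exp (M1 * τe)) with hB0
  have hB0nn : 0 ≤ B0 := by positivity
  -- the divergence and Melnikov densities along γ
  set dfun : ℝ → ℝ := fun t =>
    ((fderiv ℝ Φ (γp t, 0)) ((1, 0), 0)).1 + ((fderiv ℝ Φ (γp t, 0)) ((0, 1), 0)).2 with hdfun
  set afun : ℝ → ℝ × ℝ := fun t => (fderiv ℝ Φ (γp t, 0)) ((0, 0), 1) with hafun
  set mfun : ℝ → ℝ := fun t =>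
    (Φ (γp t, 0)).1 * (afun t).2 - (Φ (γp t, 0)).2 * (afun t).1 with hmfun
  have hDcont : Continuous (fun t => fderiv ℝ Φ (γp t, 0)) :=
    hD1c.comp (hγpc.prodMk continuous_const)
  have hdc : Continuous dfun :=
    (continuous_fst.comp (hDcont.clm_apply continuous_const)).add
      (continuous_snd.comp (hDcont.clm_apply continuous_const))
  have hΦγpc : Continuous (fun t => Φ (γp t, 0)) :=
    hΦ.continuous.comp (hγpc.prodMk continuous_const)
  have hac : Continuous afun := hDcont.clm_apply continuous_const
  have hmc : Continuous mfun :=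
    ((continuous_fst.comp hΦγpc).mul (continuous_snd.comp hac)).sub
      ((continuous_snd.comp hΦγpc).mul (continuous_fst.comp hac))
  have hdb : ∀ t : ℝ, |dfun t| ≤ 2 * M1 := by
    intro t
    have hKKt : ((γp t, 0) : (ℝ × ℝ) × ℝ) ∈ KK := hKKmem (pr t) (hprI t) 0 (by norm_num)
    have h1 : ‖(fderiv ℝ Φ (γp t, 0)) ((1, 0), 0)‖ ≤ M1 := by
      refine le_trans (hfderiv_bound _ hKKt _) ?_
      have h2 : ‖((((1:ℝ), (0:ℝ)) : ℝ × ℝ), (0:ℝ))‖ = 1 := by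
        rw [Prod.norm_def, Prod.norm_def]
        simp
      rw [h2, mul_one]
    have h2 : ‖(fderiv ℝ Φ (γp t, 0)) ((0, 1), 0)‖ ≤ M1 := by
      refine le_trans (hfderiv_bound _ hKKt _) ?_
      have h3 : ‖((((0:ℝ), (1:ℝ)) : ℝ × ℝ), (0:ℝ))‖ = 1 := by
        rw [Prod.norm_def, Prod.norm_def]
        simp
      rw [h3, mul_one]
    rw [hdfun]
    simp only
    calc |((fderiv ℝ Φ (γp t, 0)) ((1, 0), 0)).1 + ((fderiv ℝ Φ (γp t, 0)) ((0, 1), 0)).2|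
        ≤ |((fderiv ℝ Φ (γp t, 0)) ((1, 0), 0)).1| + |((fderiv ℝ Φ (γp t, 0)) ((0, 1), 0)).2| :=
          abs_add_le _ _
      _ ≤ M1 + M1 := by
          refine add_le_add ?_ ?_
          · refine le_trans ?_ h1
            rw [← Real.norm_eq_abs]
            exact norm_fst_le _
          · refine le_trans ?_ h2
            rw [← Real.norm_eq_abs]
            exact norm_snd_le _
      _ = 2 * M1 := by ring
  set Ifun : ℝ → ℝ := fun t => ∫ u in (0:ℝ)..t, dfun u with hIfun
  have hIder : ∀ t : ℝ, HasDerivAt Ifun (dfun t) t := fun t =>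
    (hdc.integral_hasStrictDerivAt 0 t).hasDerivAt
  have hIcont : Continuous Ifun := by
    have : Differentiable ℝ Ifun := fun t => (hIder t).differentiableAt
    exact this.continuous
  have hIb : ∀ t ∈ Set.Icc (0:ℝ) τe, |Ifun t| ≤ 2 * M1 * τe := by
    intro t ht
    have h1 : ∀ x ∈ Set.uIoc (0:ℝ) t, ‖dfun x‖ ≤ 2 * M1 := fun x _ => by
      rw [Real.norm_eq_abs]; exact hdb x
    have h2 := intervalIntegral.norm_integral_le_of_norm_le_const h1
    rw [Real.norm_eq_abs] at h2
    calc |Ifun t| ≤ 2 * M1 * |t - 0| := h2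
      _ ≤ 2 * M1 * τe := by
          rw [sub_zero, abs_of_nonneg ht.1]
          exact mul_le_mul_of_nonneg_left ht.2 (by positivity)
  set Wfun : ℝ → ℝ := fun t => ∫ u in (0:ℝ)..t, Real.exp (-(Ifun u)) * mfun u with hWfun
  have hWint : Continuous (fun u => Real.exp (-(Ifun u)) * mfun u) :=
    (Real.continuous_exp.comp hIcont.neg).mul hmc
  have hWder : ∀ t : ℝ, HasDerivAt Wfun (Real.exp (-(Ifun t)) * mfun t) t := fun t =>
    (hWint.integral_hasStrictDerivAt 0 t).hasDerivAt
  have hWcont : Continuous Wfun := by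
    have : Differentiable ℝ Wfun := fun t => (hWder t).differentiableAt
    exact this.continuous
  -- the κ identity
  have hκ : kapF f g γ T0 i = Real.exp (Ifun T0) * Wfun T0 := by
    have hdeq : ∀ u ∈ Set.Icc (0:ℝ) τe, divZ f g 0 (γ u) = dfun u := by
      intro u hu
      rw [hdfun]
      simp only
      rw [hγp_eq u hu]
      have hx := connX (e := e) hf hg (γ u).1 (γ u).2
      have hy := connY (e := e) hf hg (γ u).1 (γ u).2
      rw [show (((γ u).1, (γ u).2) : ℝ × ℝ) = γ u from rfl] at hx hy
      rw [divZ, ← hΦdef] at *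
      rw [hx, hy]
    have hmeq : ∀ u ∈ Set.Icc (0:ℝ) τe,
        f (γ u).1 (γ u).2 0 * pdA g i (γ u).1 (γ u).2 0
          - g (γ u).1 (γ u).2 0 * pdA f i (γ u).1 (γ u).2 0 = mfun u := by
      intro u hu
      rw [hmfun, hafun]
      simp only
      rw [hγp_eq u hu]
      have ha := connA (e := e) hf hg (γ u).1 (γ u).2
      rw [show (((γ u).1, (γ u).2) : ℝ × ℝ) = γ u from rfl] at ha
      rw [← hΦdef] at ha
      rw [ha, hΦdef, PhiM_zero]
      simp [Zv, pdA, he]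
    rw [kapF]
    have hsub : Set.uIcc (0:ℝ) T0 ⊆ Set.Icc (0:ℝ) τe := by
      rw [Set.uIcc_of_le (le_of_lt hT0)]
      exact Set.Icc_subset_Icc (le_refl _) (le_of_lt hTe)
    have hstep : ∀ t ∈ Set.uIcc (0:ℝ) T0,
        lamF f g γ T0 t * (f (γ t).1 (γ t).2 0 * pdA g i (γ t).1 (γ t).2 0
          - g (γ t).1 (γ t).2 0 * pdA f i (γ t).1 (γ t).2 0)
        = Real.exp (Ifun T0) * (Real.exp (-(Ifun t)) * mfun t) := by
      intro t htm
      have htmem : t ∈ Set.Icc (0:ℝ) τe := hsub htm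
      have hlam : lamF f g γ T0 t = Real.exp (Ifun T0 - Ifun t) := by
        rw [lamF]
        congr 1
        have hcongr : (∫ u in t..T0, divZ f g 0 (γ u)) = ∫ u in t..T0, dfun u := by
          apply intervalIntegral.integral_congr
          intro u hu
          exact hdeq u (hsub (Set.uIcc_subset_uIcc htm Set.right_mem_uIcc hu))
        rw [hcongr, hIfun]
        simp only
        rw [← intervalIntegral.integral_interval_sub_left
          (hdc.intervalIntegrable 0 T0) (hdc.intervalIntegrable 0 t)]
      rw [hlam, hmeq t htmem]
      rw [show Ifun T0 - Ifun t = Ifun T0 + -(Ifun t) by ring, Real.exp_add]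
      ring
    rw [intervalIntegral.integral_congr hstep]
    rw [intervalIntegral.integral_const_mul]
  -- constants for the quadratic error estimate
  set C2 : ℝ := M2 * (B0 + 1) ^ 2 with hC2
  set C3 : ℝ := 2 * M0 * C2 with hC3
  set C4 : ℝ := Real.exp (2 * M1 * τe) * C3 with hC4
  set C6 : ℝ := Real.exp (2 * M1 * τe) * (C4 * τe) with hC6
  -- base-point data
  set Pbc : ℝ × ℝ := Φ ((b, c), 0) with hPbc
  have hPbc_eq : Pbc = (f b c 0, g b c 0) := by
    rw [hPbc, hΦdef, PhiM_zero]
    rfl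
  set Gfun : ℝ → ℝ := fun s => (Φ (γ (Tf s), 0)).1 * (c - (γ (Tf s)).2)
      - (Φ (γ (Tf s), 0)).2 * (Sf s - (γ (Tf s)).1) with hGfun
  -- the central quadratic estimate
  have hC2nn : 0 ≤ C2 := by
    rw [hC2]
    exact mul_nonneg hM2nn (by positivity)
  have hC3nn : 0 ≤ C3 := by
    rw [hC3]
    exact mul_nonneg (mul_nonneg (by norm_num) hM0nn) hC2nn
  have hC4nn : 0 ≤ C4 := by
    rw [hC4]
    exact mul_nonneg (le_of_lt (Real.exp_pos _)) hC3nn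
  have hmain : ∀ᶠ s in 𝓝 (0:ℝ),
      |Gfun s - s * (Real.exp (Ifun (Tf s)) * Wfun (Tf s))| ≤ C6 * s ^ 2 := by
    have hTtend' : Filter.Tendsto Tf (𝓝 0) (𝓝 T0) := by
      rw [← hTf0]; exact hTd.continuousAt
    have hev1 : ∀ᶠ s : ℝ in 𝓝 0, Tf s ∈ Set.Ioo 0 τe :=
      hTtend'.eventually_mem (Ioo_mem_nhds hT0 hTe)
    have hev2 : ∀ᶠ s : ℝ in 𝓝 0, |s| ≤ 1 := by
      have h1 : Filter.Tendsto (fun s : ℝ => |s|) (𝓝 0) (𝓝 |(0:ℝ)|) := continuous_abs.tendsto 0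
      rw [abs_zero] at h1
      exact (h1.eventually_lt_const (by norm_num : (0:ℝ) < 1)).mono fun s h => le_of_lt h
    have hev3 : ∀ᶠ s : ℝ in 𝓝 0, (B0 + 1) * |s| ≤ 1/2 := by
      have h1 : Filter.Tendsto (fun s : ℝ => (B0 + 1) * |s|) (𝓝 0) (𝓝 ((B0 + 1) * |(0:ℝ)|)) :=
        (continuous_const.mul continuous_abs).tendsto 0
      rw [abs_zero, mul_zero] at h1
      exact (h1.eventually_lt_const (by norm_num : (0:ℝ) < 1/2)).mono fun s h => le_of_lt h
    filter_upwards [hsol, hev1, hev2, hev3] with s hsX hTsm hs1 hs2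
    obtain ⟨X, hX, hX0, hXT⟩ := hsX
    have hTs0 : (0:ℝ) ≤ Tf s := le_of_lt hTsm.1
    have hTssub : Set.Icc (0:ℝ) (Tf s) ⊆ Set.Icc 0 τe :=
      Set.Icc_subset_Icc (le_refl _) (le_of_lt hTsm.2)
    have hXder : ∀ t ∈ Set.Icc (0:ℝ) (Tf s), HasDerivAt X (Φ (X t, s)) t := fun t ht => hX t ht
    have hXc : ContinuousOn X (Set.Icc 0 (Tf s)) := fun t ht =>
      ((hXder t ht).continuousAt).continuousWithinAt
    have hsIcc : s ∈ Set.Icc (-1:ℝ) 1 := abs_le.mp hs1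
    -- Grönwall comparison on subintervals where X remains in the tube
    have grona : ∀ u ∈ Set.Icc (0:ℝ) (Tf s), (∀ t ∈ Set.Icc (0:ℝ) u, dist (X t) (γ t) ≤ 1) →
        ∀ t ∈ Set.Icc (0:ℝ) u, dist (X t) (γ t) ≤ B0 * |s| := by
      intro u hu hmem t ht
      have husub : Set.Icc (0:ℝ) u ⊆ Set.Icc (0:ℝ) (Tf s) := Set.Icc_subset_Icc (le_refl _) hu.2
      have husub2 : Set.Icc (0:ℝ) u ⊆ Set.Icc (0:ℝ) τe := subset_trans husub hTssub
      have h1 := dist_le_of_approx_trajectories_ODE_of_mem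
        (v := fun _ p => Φ (p, s)) (s := fun t' => Metric.closedBall (γp t') 1)
        (K := M1.toNNReal) (εf := 0) (εg := M1 * |s|) (δ := 0)
        (fun t' _ => hLipOn s hsIcc t')
        (hXc.mono husub)
        (fun t' ht' => (hXder t' (husub (Set.Ico_subset_Icc_self ht'))).hasDerivWithinAt)
        (fun t' ht' => by simp)
        (fun t' ht' => by
          rw [Metric.mem_closedBall, hγp_eq t' (husub2 (Set.Ico_subset_Icc_self ht'))]
          exact hmem t' (Set.Ico_subset_Icc_self ht'))
        (hγc.mono husub2)
        (fun t' ht' => (hγder t' (husub2 (Set.Ico_subset_Icc_self ht'))).hasDerivWithinAt)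
        (fun t' ht' => by
          rw [dist_eq_norm]
          exact hγerr s hsIcc t' (husub2 (Set.Ico_subset_Icc_self ht')))
        (fun t' ht' => by
          rw [Metric.mem_closedBall, hγp_eq t' (husub2 (Set.Ico_subset_Icc_self ht'))]
          rw [dist_self]
          norm_num)
        (by rw [hX0, dist_self])
        t ht
      rw [zero_add, sub_zero] at h1
      refine le_trans h1 (le_trans (gronB hM1nn (le_of_lt hτe) (by positivity) (husub2 ht)) ?_)
      rw [hB0]
      exact le_of_eq (by ring)
    -- bootstrap: X stays in the tube up to time Tf s
    have hboot : ∀ t ∈ Set.Icc (0:ℝ) (Tf s), dist (X t) (γ t) ≤ B0 * |s| := by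
      have hdistc : ContinuousOn (fun t' => dist (X t') (γ t')) (Set.Icc 0 (Tf s)) :=
        fun t ht => ((hXc t ht).dist ((hγc.mono hTssub) t ht))
      set A : Set ℝ :=
        {u | u ∈ Set.Icc (0:ℝ) (Tf s) ∧ ∀ t ∈ Set.Icc (0:ℝ) u, dist (X t) (γ t) ≤ 1} with hA
      have hA0 : (0:ℝ) ∈ A := by
        refine ⟨⟨le_refl _, hTs0⟩, ?_⟩
        intro t ht
        have ht0 : t = 0 := le_antisymm ht.2 ht.1
        rw [ht0, hX0, dist_self]
        norm_num
      have hAne : A.Nonempty := ⟨0, hA0⟩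
      have hAbdd : BddAbove A := ⟨Tf s, fun u hu => hu.1.2⟩
      have hu0mem : sSup A ∈ Set.Icc (0:ℝ) (Tf s) :=
        ⟨le_csSup hAbdd hA0, csSup_le hAne fun u hu => hu.1.2⟩
      have hu0A : sSup A ∈ A := by
        refine ⟨hu0mem, ?_⟩
        intro t ht
        rcases lt_or_eq_of_le ht.2 with hlt | heq
        · obtain ⟨u, huA, hul⟩ := exists_lt_of_lt_csSup hAne hlt
          exact huA.2 t ⟨ht.1, le_of_lt hul⟩
        · rcases eq_or_lt_of_le ht.1 with h00 | h00
          · rw [← h00, hX0, dist_self]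
            norm_num
          · have hcont : ContinuousWithinAt (fun t' => dist (X t') (γ t')) (Set.Ico 0 t) t := by
              apply (hdistc t (heq ▸ hu0mem)).mono
              intro x hx
              exact ⟨hx.1, le_trans (le_of_lt hx.2) (heq ▸ hu0mem).2⟩
            have hmemcl : t ∈ closure (Set.Ico 0 t) := by
              rw [closure_Ico (ne_of_lt h00)]
              exact ⟨le_of_lt h00, le_refl t⟩
            have hnb : (𝓝[Set.Ico 0 t] t).NeBot := mem_closure_iff_nhdsWithin_neBot.mp hmemcl
            refine le_of_tendsto hcont ?_
            filter_upwards [self_mem_nhdsWithin] with t' ht'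
            have hlt2 : t' < sSup A := heq ▸ ht'.2
            obtain ⟨u, huA, hul⟩ := exists_lt_of_lt_csSup hAne hlt2
            exact huA.2 t' ⟨ht'.1, le_of_lt hul⟩
      have hu0Ts : sSup A = Tf s := by
        by_contra hne2
        have hlt : sSup A < Tf s := lt_of_le_of_ne hu0mem.2 hne2
        have hhalf : ∀ t ∈ Set.Icc (0:ℝ) (sSup A), dist (X t) (γ t) ≤ 1/2 := by
          intro t ht
          refine le_trans (grona (sSup A) hu0mem hu0A.2 t ht) (le_trans ?_ hs2)
          nlinarith [abs_nonneg s]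
        have hcont2 : ContinuousWithinAt (fun t' => dist (X t') (γ t'))
            (Set.Icc 0 (Tf s)) (sSup A) := hdistc (sSup A) hu0mem
        have hlt1 : dist (X (sSup A)) (γ (sSup A)) < 1 :=
          lt_of_le_of_lt (hhalf (sSup A) ⟨hu0mem.1, le_refl _⟩) (by norm_num)
        have hev : ∀ᶠ t' in 𝓝[Set.Icc 0 (Tf s)] (sSup A), dist (X t') (γ t') < 1 :=
          hcont2.eventually_lt_const hlt1
        obtain ⟨ε', hε', hball2⟩ := Metric.mem_nhdsWithin_iff.mp hev
        have hu1A : min (Tf s) (sSup A + ε'/2) ∈ A := by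
          refine ⟨⟨le_min hTs0 (by linarith [hu0mem.1]), min_le_left _ _⟩, ?_⟩
          intro t ht
          rcases le_or_gt t (sSup A) with hcase | hcase
          · exact le_trans (hhalf t ⟨ht.1, hcase⟩) (by norm_num)
          · have htIcc : t ∈ Set.Icc (0:ℝ) (Tf s) := ⟨ht.1, le_trans ht.2 (min_le_left _ _)⟩
            have htb : t ∈ Metric.ball (sSup A) ε' := by
              rw [Metric.mem_ball, Real.dist_eq, abs_of_pos (sub_pos.mpr hcase)]
              have h7 := le_trans ht.2 (min_le_right _ _)
              linarith
            exact le_of_lt (hball2 ⟨htb, htIcc⟩)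
        have h5 : min (Tf s) (sSup A + ε'/2) ≤ sSup A := le_csSup hAbdd hu1A
        have h6 : sSup A < min (Tf s) (sSup A + ε'/2) := lt_min hlt (by linarith)
        linarith
      intro t ht
      exact grona (Tf s) ⟨hTs0, le_refl _⟩ (hu0Ts ▸ hu0A.2) t ht
    -- the wedge
    set w : ℝ → ℝ × ℝ := fun t => X t - γ t with hw
    set Δ : ℝ → ℝ := fun t => (Φ (γ t, 0)).1 * (w t).2 - (Φ (γ t, 0)).2 * (w t).1 with hΔdef
    have hΔT : Δ (Tf s) = Gfun s := by
      rw [hΔdef, hGfun, hw]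
      simp only
      rw [hXT]
      simp only [Prod.fst_sub, Prod.snd_sub]
    obtain ⟨ρf, hρf⟩ : ∃ F : ℝ → ℝ × ℝ, F = fun t => Φ (X t, s) - Φ (γ t, 0)
        - fderiv ℝ Φ (γ t, 0) ((X t, s) - ((γ t, (0:ℝ)) : (ℝ × ℝ) × ℝ)) := ⟨_, rfl⟩
    obtain ⟨Rho, hRho⟩ : ∃ F : ℝ → ℝ, F = fun t =>
        (Φ (γ t, 0)).1 * (ρf t).2 - (Φ (γ t, 0)).2 * (ρf t).1 := ⟨_, rfl⟩
    have hρb : ∀ t ∈ Set.Icc (0:ℝ) (Tf s), ‖ρf t‖ ≤ C2 * s ^ 2 := by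
      intro t ht
      have htτ : t ∈ Set.Icc (0:ℝ) τe := hTssub ht
      have hzX : ((X t, s) : (ℝ × ℝ) × ℝ) ∈ Metric.closedBall ((γ t, (0:ℝ)) : (ℝ × ℝ) × ℝ) 1 := by
        rw [Metric.mem_closedBall, Prod.dist_eq]
        apply max_le
        · refine le_trans (hboot t ht) ?_
          nlinarith [abs_nonneg s]
        · rw [Real.dist_0_eq_abs]
          exact hs1
      have h1 := hTay t htτ (X t, s) hzX
      rw [hρf]
      simp only
      refine le_trans h1 ?_
      have h2 : ‖((X t, s) : (ℝ × ℝ) × ℝ) - ((γ t, (0:ℝ)) : (ℝ × ℝ) × ℝ)‖ ≤ (B0 + 1) * |s| := by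
        have h3 : ((X t, s) : (ℝ × ℝ) × ℝ) - ((γ t, (0:ℝ)) : (ℝ × ℝ) × ℝ) = (X t - γ t, s) := by
          simp [Prod.ext_iff]
        rw [h3, Prod.norm_def]
        apply max_le
        · rw [← dist_eq_norm]
          refine le_trans (hboot t ht) ?_
          nlinarith [abs_nonneg s]
        · rw [Real.norm_eq_abs]
          nlinarith [abs_nonneg s]
      calc M2 * ‖((X t, s) : (ℝ × ℝ) × ℝ) - ((γ t, (0:ℝ)) : (ℝ × ℝ) × ℝ)‖ ^ 2
          ≤ M2 * ((B0 + 1) * |s|) ^ 2 := by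
            apply mul_le_mul_of_nonneg_left _ hM2nn
            exact pow_le_pow_left₀ (norm_nonneg _) h2 2
        _ = C2 * s ^ 2 := by rw [hC2, ← sq_abs s]; ring
    have hRhob : ∀ t ∈ Set.Icc (0:ℝ) (Tf s), |Rho t| ≤ C3 * s ^ 2 := by
      intro t ht
      have htτ : t ∈ Set.Icc (0:ℝ) τe := hTssub ht
      have hPb : ‖Φ (γ t, 0)‖ ≤ M0 := hM0 _ (hKKmem t htτ 0 (by norm_num))
      have h1 : |(Φ (γ t, 0)).1| ≤ M0 :=
        le_trans (by rw [← Real.norm_eq_abs]; exact norm_fst_le _) hPb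
      have h2 : |(Φ (γ t, 0)).2| ≤ M0 :=
        le_trans (by rw [← Real.norm_eq_abs]; exact norm_snd_le _) hPb
      have h3 : |(ρf t).1| ≤ C2 * s ^ 2 :=
        le_trans (by rw [← Real.norm_eq_abs]; exact norm_fst_le _) (hρb t ht)
      have h4 : |(ρf t).2| ≤ C2 * s ^ 2 :=
        le_trans (by rw [← Real.norm_eq_abs]; exact norm_snd_le _) (hρb t ht)
      rw [hRho]
      simp only
      calc |(Φ (γ t, 0)).1 * (ρf t).2 - (Φ (γ t, 0)).2 * (ρf t).1|
          ≤ |(Φ (γ t, 0)).1 * (ρf t).2| + |(Φ (γ t, 0)).2 * (ρf t).1| := abs_sub _ _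
        _ = |(Φ (γ t, 0)).1| * |(ρf t).2| + |(Φ (γ t, 0)).2| * |(ρf t).1| := by
            rw [abs_mul, abs_mul]
        _ ≤ M0 * (C2 * s ^ 2) + M0 * (C2 * s ^ 2) := by
            refine add_le_add ?_ ?_
            · exact mul_le_mul h1 h4 (abs_nonneg _) hM0nn
            · exact mul_le_mul h2 h3 (abs_nonneg _) hM0nn
        _ = C3 * s ^ 2 := by rw [hC3]; ring
    -- exact derivative of the wedge
    have hΔder : ∀ t ∈ Set.Icc (0:ℝ) (Tf s),
        HasDerivAt Δ (dfun t * Δ t + s * mfun t + Rho t) t := by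
      intro t ht
      have htτ : t ∈ Set.Icc (0:ℝ) τe := hTssub ht
      have hγpt : γp t = γ t := hγp_eq t htτ
      have hcurve : HasDerivAt (fun t' => ((γ t', (0:ℝ)) : (ℝ × ℝ) × ℝ)) (Φ (γ t, 0), (0:ℝ)) t :=
        (hγder t htτ).prodMk (hasDerivAt_const t (0:ℝ))
      have hPhider : HasDerivAt (fun t' => Φ (γ t', 0))
          (fderiv ℝ Φ (γ t, 0) (Φ (γ t, 0), 0)) t :=
        by have h := (hΦdiff ((γ t, (0:ℝ)))).hasFDerivAt.comp_hasDerivAt t hcurve; exact h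
      have hP1 : HasDerivAt (fun t' => (Φ (γ t', 0)).1)
          ((fderiv ℝ Φ (γ t, 0) (Φ (γ t, 0), 0)).1) t := by
        have h3 := (ContinuousLinearMap.fst ℝ ℝ ℝ).hasFDerivAt.comp_hasDerivAt t hPhider
        simpa [Function.comp_def] using h3
      have hP2 : HasDerivAt (fun t' => (Φ (γ t', 0)).2)
          ((fderiv ℝ Φ (γ t, 0) (Φ (γ t, 0), 0)).2) t := by
        have h3 := (ContinuousLinearMap.snd ℝ ℝ ℝ).hasFDerivAt.comp_hasDerivAt t hPhider
        simpa [Function.comp_def] using h3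
      have hwd : HasDerivAt w (Φ (X t, s) - Φ (γ t, 0)) t := by
        rw [hw]
        exact (hXder t ht).sub (hγder t htτ)
      have hw1 : HasDerivAt (fun t' => (w t').1) ((Φ (X t, s) - Φ (γ t, 0)).1) t := by
        have h3 := (ContinuousLinearMap.fst ℝ ℝ ℝ).hasFDerivAt.comp_hasDerivAt t hwd
        simpa [Function.comp_def] using h3
      have hw2 : HasDerivAt (fun t' => (w t').2) ((Φ (X t, s) - Φ (γ t, 0)).2) t := by
        have h3 := (ContinuousLinearMap.snd ℝ ℝ ℝ).hasFDerivAt.comp_hasDerivAt t hwd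
        simpa [Function.comp_def] using h3
      have hmul : HasDerivAt (fun t' => (Φ (γ t', 0)).1 * (w t').2 - (Φ (γ t', 0)).2 * (w t').1)
          ((fderiv ℝ Φ (γ t, 0) (Φ (γ t, 0), 0)).1 * (w t).2
            + (Φ (γ t, 0)).1 * (Φ (X t, s) - Φ (γ t, 0)).2
            - ((fderiv ℝ Φ (γ t, 0) (Φ (γ t, 0), 0)).2 * (w t).1
              + (Φ (γ t, 0)).2 * (Φ (X t, s) - Φ (γ t, 0)).1)) t :=
        (hP1.mul hw2).sub (hP2.mul hw1)
      rw [hΔdef]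
      convert hmul using 1
      have hsplit : ∀ v : (ℝ × ℝ) × ℝ, fderiv ℝ Φ (γ t, 0) v
          = v.1.1 • fderiv ℝ Φ (γ t, 0) ((1, 0), 0) + v.1.2 • fderiv ℝ Φ (γ t, 0) ((0, 1), 0)
            + v.2 • fderiv ℝ Φ (γ t, 0) ((0, 0), 1) := by
        intro v
        have hv : v = v.1.1 • (((1, 0), 0) : (ℝ × ℝ) × ℝ) + v.1.2 • (((0, 1), 0) : (ℝ × ℝ) × ℝ)
            + v.2 • (((0, 0), 1) : (ℝ × ℝ) × ℝ) := by
          refine Prod.ext (Prod.ext ?_ ?_) ?_ <;> simp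
        conv_lhs => rw [hv]
        rw [map_add, map_add, _root_.map_smul, _root_.map_smul, _root_.map_smul]
      rw [hdfun, hmfun, hafun, hRho, hρf, hw]
      simp only [hγpt]
      rw [hsplit (((Φ (γ t, 0), (0:ℝ)) : (ℝ × ℝ) × ℝ)),
        hsplit (((X t, s) : (ℝ × ℝ) × ℝ) - ((γ t, (0:ℝ)) : (ℝ × ℝ) × ℝ))]
      simp only [Prod.fst_add, Prod.snd_add, Prod.smul_fst, Prod.smul_snd, smul_eq_mul,
        Prod.fst_sub, Prod.snd_sub]
      ring
    -- integrating factor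
    set J : ℝ → ℝ := fun t => Real.exp (-(Ifun t)) * Δ t - s * Wfun t with hJdef
    have hJ0 : J 0 = 0 := by
      rw [hJdef]
      simp only
      have h1 : Δ 0 = 0 := by
        rw [hΔdef, hw]
        simp only
        rw [hX0]
        simp
      rw [h1, hWfun]
      simp
    have hJder : ∀ t ∈ Set.Icc (0:ℝ) (Tf s),
        HasDerivAt J (Real.exp (-(Ifun t)) * Rho t) t := by
      intro t ht
      have h1 : HasDerivAt (fun t' => Real.exp (-(Ifun t')))
          (Real.exp (-(Ifun t)) * (-(dfun t))) t := ((hIder t).neg).exp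
      have h2 := (h1.mul (hΔder t ht)).sub ((hWder t).const_mul s)
      rw [hJdef]
      refine h2.congr_deriv ?_
      ring
    have hJb : ∀ t ∈ Set.Ico (0:ℝ) (Tf s), ‖Real.exp (-(Ifun t)) * Rho t‖ ≤ C4 * s ^ 2 := by
      intro t ht
      have htτ : t ∈ Set.Icc (0:ℝ) τe := hTssub (Set.Ico_subset_Icc_self ht)
      have hexpb : Real.exp (-(Ifun t)) ≤ Real.exp (2 * M1 * τe) := by
        apply Real.exp_le_exp.mpr
        have h1 := abs_le.mp (hIb t htτ)
        linarith [h1.1]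
      rw [Real.norm_eq_abs, abs_mul, abs_of_pos (Real.exp_pos _)]
      calc Real.exp (-(Ifun t)) * |Rho t| ≤ Real.exp (2 * M1 * τe) * (C3 * s ^ 2) :=
            mul_le_mul hexpb (hRhob t (Set.Ico_subset_Icc_self ht)) (abs_nonneg _)
              (le_of_lt (Real.exp_pos _))
        _ = C4 * s ^ 2 := by rw [hC4]; ring
    have hJT := norm_image_sub_le_of_norm_deriv_le_segment'
      (fun t ht => (hJder t ht).hasDerivWithinAt) hJb (Tf s) ⟨hTs0, le_refl _⟩
    rw [hJ0, sub_zero, Real.norm_eq_abs, sub_zero] at hJT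
    have hJT2 : |J (Tf s)| ≤ C4 * s ^ 2 * τe := by
      refine le_trans hJT ?_
      exact mul_le_mul_of_nonneg_left (le_of_lt hTsm.2) (by positivity)
    have hGeq : Gfun s - s * (Real.exp (Ifun (Tf s)) * Wfun (Tf s))
        = Real.exp (Ifun (Tf s)) * J (Tf s) := by
      rw [← hΔT, hJdef]
      simp only
      have hee : Real.exp (Ifun (Tf s)) * Real.exp (-(Ifun (Tf s))) = 1 := by
        rw [← Real.exp_add, add_neg_cancel, Real.exp_zero]
      linear_combination (-((Φ (γ (Tf s), 0)).1 * (w (Tf s)).2 - (Φ (γ (Tf s), 0)).2 * (w (Tf s)).1)) * hee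
    rw [hGeq]
    have hITs : |Ifun (Tf s)| ≤ 2 * M1 * τe := hIb (Tf s) (hTssub ⟨hTs0, le_refl _⟩)
    rw [abs_mul, abs_of_pos (Real.exp_pos _)]
    calc Real.exp (Ifun (Tf s)) * |J (Tf s)| ≤ Real.exp (2 * M1 * τe) * (C4 * s ^ 2 * τe) := by
          refine mul_le_mul ?_ hJT2 (abs_nonneg _) (le_of_lt (Real.exp_pos _))
          apply Real.exp_le_exp.mpr
          linarith [(abs_le.mp hITs).2]
      _ = C6 * s ^ 2 := by rw [hC6]; ring
  -- convergence data
  have hTtend : Filter.Tendsto Tf (𝓝 0) (𝓝 T0) := by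
    rw [← hTf0]; exact hTd.continuousAt
  have hγcontT0 : ContinuousAt γ T0 := (hγder T0 hT0mem).continuousAt
  have hγT : Filter.Tendsto (fun s => γ (Tf s)) (𝓝 0) (𝓝 ((b, c) : ℝ × ℝ)) := by
    rw [← hbc]
    exact hγcontT0.tendsto.comp hTtend
  have hPT : Filter.Tendsto (fun s => Φ (γ (Tf s), 0)) (𝓝 0) (𝓝 Pbc) := by
    rw [hPbc]
    exact (hΦ.continuous.tendsto _).comp (hγT.prodMk_nhds (tendsto_const_nhds (x := (0:ℝ))))
  have hTslope : Filter.Tendsto (fun s => (Tf s - T0) / s) (𝓝[≠] 0) (𝓝 (deriv Tf 0)) := by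
    have h1 := hasDerivAt_iff_tendsto_slope.mp hTd.hasDerivAt
    have h2 : slope Tf 0 = fun s => (Tf s - T0) / s := by
      funext s
      rw [slope_def_field, hTf0, sub_zero]
    rwa [h2] at h1
  -- little-o expansion of γ ∘ Tf
  have hγlo : (fun s => γ (Tf s) - (b, c) - (Tf s - T0) • Pbc) =o[𝓝[≠] (0:ℝ)] (fun s => s) := by
    have h1 : (fun t' => γ t' - γ T0 - (t' - T0) • Pbc) =o[𝓝 T0] (fun t' => t' - T0) := by
      have h2 := hγder T0 hT0mem
      rw [hbc, ← hPbc] at h2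
      exact hasDerivAt_iff_isLittleO.mp h2
    have h2 : Filter.Tendsto Tf (𝓝[≠] 0) (𝓝 T0) := hTtend.mono_left nhdsWithin_le_nhds
    have h3 := (h1.comp_tendsto h2)
    have h4 : (fun s : ℝ => Tf s - T0) =O[𝓝[≠] (0:ℝ)] (fun s => s) := by
      have h5 := hTd.hasFDerivAt.isBigO_sub
      have h6 : (fun s : ℝ => Tf s - T0) =O[𝓝 (0:ℝ)] (fun s => s) := by
        simpa [hTf0] using h5
      exact h6.mono nhdsWithin_le_nhds
    have h7 : ((fun t' => γ t' - γ T0 - (t' - T0) • Pbc) ∘ Tf)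
        = fun s => γ (Tf s) - (b, c) - (Tf s - T0) • Pbc := by
      funext s
      simp [Function.comp, hbc]
    rw [h7] at h3
    exact h3.trans_isBigO h4
  have hγlo1 : (fun s => (γ (Tf s)).1 - b - (Tf s - T0) * Pbc.1) =o[𝓝[≠] (0:ℝ)] (fun s => s) := by
    refine Asymptotics.IsBigO.trans_isLittleO ?_ hγlo
    apply Asymptotics.isBigO_of_le
    intro s
    have : (γ (Tf s)).1 - b - (Tf s - T0) * Pbc.1
        = (γ (Tf s) - (b, c) - (Tf s - T0) • Pbc).1 := by
      simp [Prod.fst_sub, Prod.smul_fst, smul_eq_mul]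
    rw [this]
    exact norm_fst_le _
  have hγlo2 : (fun s => (γ (Tf s)).2 - c - (Tf s - T0) * Pbc.2) =o[𝓝[≠] (0:ℝ)] (fun s => s) := by
    refine Asymptotics.IsBigO.trans_isLittleO ?_ hγlo
    apply Asymptotics.isBigO_of_le
    intro s
    have : (γ (Tf s)).2 - c - (Tf s - T0) * Pbc.2
        = (γ (Tf s) - (b, c) - (Tf s - T0) • Pbc).2 := by
      simp [Prod.snd_sub, Prod.smul_snd, smul_eq_mul]
    rw [this]
    exact norm_snd_le _
  have he1 : Filter.Tendsto (fun s => ((γ (Tf s)).1 - b - (Tf s - T0) * Pbc.1) / s)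
      (𝓝[≠] 0) (𝓝 0) := hγlo1.tendsto_div_nhds_zero
  have he2 : Filter.Tendsto (fun s => ((γ (Tf s)).2 - c - (Tf s - T0) * Pbc.2) / s)
      (𝓝[≠] 0) (𝓝 0) := hγlo2.tendsto_div_nhds_zero
  -- limit of Gfun s / s
  have hGdiv : Filter.Tendsto (fun s => Gfun s / s) (𝓝[≠] 0) (𝓝 (kapF f g γ T0 i)) := by
    have hconst : Filter.Tendsto (fun s => Real.exp (Ifun (Tf s)) * Wfun (Tf s)) (𝓝 0)
        (𝓝 (Real.exp (Ifun T0) * Wfun T0)) := by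
      refine Filter.Tendsto.mul ?_ ?_
      · exact ((Real.continuous_exp.comp hIcont).tendsto _).comp hTtend
      · exact (hWcont.tendsto _).comp hTtend
    have herr : Filter.Tendsto
        (fun s => (Gfun s - s * (Real.exp (Ifun (Tf s)) * Wfun (Tf s))) / s) (𝓝[≠] 0) (𝓝 0) := by
      apply squeeze_zero_norm' (a := fun s => C6 * |s|)
      · have hself : ∀ᶠ s : ℝ in 𝓝[≠] 0, s ≠ 0 := self_mem_nhdsWithin
        filter_upwards [hmain.filter_mono nhdsWithin_le_nhds, hself] with s hs hs0
        rw [Real.norm_eq_abs, abs_div]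
        rw [div_le_iff₀ (abs_pos.mpr hs0)]
        calc |Gfun s - s * (Real.exp (Ifun (Tf s)) * Wfun (Tf s))| ≤ C6 * s ^ 2 := hs
          _ = C6 * |s| * |s| := by rw [← sq_abs]; ring
      · have : Filter.Tendsto (fun s : ℝ => C6 * |s|) (𝓝 0) (𝓝 (C6 * |(0:ℝ)|)) :=
          (continuous_const.mul continuous_abs).tendsto 0
        simpa using this.mono_left nhdsWithin_le_nhds
    have hsum := herr.add (hconst.mono_left nhdsWithin_le_nhds)
    rw [zero_add] at hsum
    have hcongr : ∀ᶠ s : ℝ in 𝓝[≠] 0,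
        (Gfun s - s * (Real.exp (Ifun (Tf s)) * Wfun (Tf s))) / s
          + Real.exp (Ifun (Tf s)) * Wfun (Tf s) = Gfun s / s := by
      filter_upwards [self_mem_nhdsWithin] with s hs0
      have hs0' : s ≠ 0 := hs0
      field_simp
      ring
    rw [hκ]
    exact Filter.Tendsto.congr' hcongr hsum
  -- assemble the final limit
  have hq0 : g b c 0 ≠ 0 := hq
  have hP2T : Filter.Tendsto (fun s => (Φ (γ (Tf s), 0)).2) (𝓝[≠] 0) (𝓝 (g b c 0)) := by
    have h1 : Filter.Tendsto (fun s => (Φ (γ (Tf s), 0)).2) (𝓝 0) (𝓝 Pbc.2) :=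
      (continuous_snd.tendsto _).comp hPT
    rw [hPbc_eq] at h1
    exact h1.mono_left nhdsWithin_le_nhds
  have hP1T : Filter.Tendsto (fun s => (Φ (γ (Tf s), 0)).1) (𝓝[≠] 0) (𝓝 (f b c 0)) := by
    have h1 : Filter.Tendsto (fun s => (Φ (γ (Tf s), 0)).1) (𝓝 0) (𝓝 Pbc.1) :=
      (continuous_fst.tendsto _).comp hPT
    rw [hPbc_eq] at h1
    exact h1.mono_left nhdsWithin_le_nhds
  have hTsl : Filter.Tendsto (fun s => (Tf s - T0) / s) (𝓝[≠] 0) (𝓝 (deriv Tf 0)) := hTslope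
  -- (c - γ₂(Tf s))/s  →  -(g b c 0) * T'
  have hc2 : Filter.Tendsto (fun s => (c - (γ (Tf s)).2) / s) (𝓝[≠] 0)
      (𝓝 (-(Pbc.2 * deriv Tf 0))) := by
    have h1 : ∀ s : ℝ, (c - (γ (Tf s)).2) / s
        = -(((γ (Tf s)).2 - c - (Tf s - T0) * Pbc.2) / s) - ((Tf s - T0) / s) * Pbc.2 := by
      intro s
      rcases eq_or_ne s 0 with rfl | hs0
      · simp
      · field_simp; ring
    have h2 : Filter.Tendsto
        (fun s => -(((γ (Tf s)).2 - c - (Tf s - T0) * Pbc.2) / s) - ((Tf s - T0) / s) * Pbc.2)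
        (𝓝[≠] 0) (𝓝 (-(0:ℝ) - deriv Tf 0 * Pbc.2)) :=
      (he2.neg).sub (hTsl.mul_const Pbc.2)
    have h3 := h2.congr (fun s => (h1 s).symm)
    have h4 : -(0:ℝ) - deriv Tf 0 * Pbc.2 = -(Pbc.2 * deriv Tf 0) := by ring
    rwa [h4] at h3
  -- (γ₁(Tf s) - b)/s  →  f b c 0 * T'
  have hc1 : Filter.Tendsto (fun s => ((γ (Tf s)).1 - b) / s) (𝓝[≠] 0)
      (𝓝 (Pbc.1 * deriv Tf 0)) := by
    have h1 : ∀ s : ℝ, ((γ (Tf s)).1 - b) / s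
        = (((γ (Tf s)).1 - b - (Tf s - T0) * Pbc.1) / s) + ((Tf s - T0) / s) * Pbc.1 := by
      intro s
      rcases eq_or_ne s 0 with rfl | hs0
      · simp
      · field_simp; ring
    have h2 : Filter.Tendsto
        (fun s => (((γ (Tf s)).1 - b - (Tf s - T0) * Pbc.1) / s) + ((Tf s - T0) / s) * Pbc.1)
        (𝓝[≠] 0) (𝓝 ((0:ℝ) + deriv Tf 0 * Pbc.1)) :=
      he1.add (hTsl.mul_const Pbc.1)
    have h3 := h2.congr (fun s => (h1 s).symm)
    have h4 : (0:ℝ) + deriv Tf 0 * Pbc.1 = Pbc.1 * deriv Tf 0 := by ring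
    rwa [h4] at h3
  -- numerator limit
  have hNum : Filter.Tendsto (fun s =>
      (Φ (γ (Tf s), 0)).1 * ((c - (γ (Tf s)).2) / s) - Gfun s / s
        + (Φ (γ (Tf s), 0)).2 * (((γ (Tf s)).1 - b) / s)) (𝓝[≠] 0)
      (𝓝 (-(kapF f g γ T0 i))) := by
    have h1 := ((hP1T.mul hc2).sub hGdiv).add (hP2T.mul hc1)
    have h2 : f b c 0 * -(Pbc.2 * deriv Tf 0) - kapF f g γ T0 i
        + g b c 0 * (Pbc.1 * deriv Tf 0) = -(kapF f g γ T0 i) := by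
      rw [hPbc_eq]
      ring
    rwa [h2] at h1
  have hfinal : Filter.Tendsto (fun s => (Sf s - b) / s) (𝓝[≠] 0)
      (𝓝 (-(kapF f g γ T0 i) / g b c 0)) := by
    have hdivlim := hNum.div hP2T hq0
    have hevne : ∀ᶠ s : ℝ in 𝓝[≠] 0, (Φ (γ (Tf s), 0)).2 ≠ 0 := hP2T.eventually_ne hq0
    have hcongr2 : ∀ᶠ s : ℝ in 𝓝[≠] 0,
        ((Φ (γ (Tf s), 0)).1 * ((c - (γ (Tf s)).2) / s) - Gfun s / s
          + (Φ (γ (Tf s), 0)).2 * (((γ (Tf s)).1 - b) / s)) / (Φ (γ (Tf s), 0)).2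
        = (Sf s - b) / s := by
      filter_upwards [self_mem_nhdsWithin, hevne] with s hs0 hsne
      have hs0' : s ≠ 0 := hs0
      rw [hGfun]
      field_simp
      ring
    exact Filter.Tendsto.congr' hcongr2 hdivlim
  have hslopeS : Filter.Tendsto (fun s => (Sf s - b) / s) (𝓝[≠] 0) (𝓝 (deriv Sf 0)) := by
    have h1 := hasDerivAt_iff_tendsto_slope.mp hSd.hasDerivAt
    have h2 : slope Sf 0 = fun s => (Sf s - b) / s := by
      funext s
      rw [slope_def_field, hSf0, sub_zero]
    rwa [h2] at h1
  exact tendsto_nhds_unique hslopeS hfinal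

end Stmt2Aux

/-- parameter derivatives of the transition maps:
`σ⁺_{αᵢ}(−a,0;0) = −κᵢ⁺/g⁺(b,c;0)` and `σ⁻_{αᵢ}(a,0;0) = −κᵢ⁻/g⁺(b,c;0)`. -/
theorem statement2
    (m k : ℕ) (hk : 3 ≤ k)
    (f g : ℝ → ℝ → (Fin m → ℝ) → ℝ)
    (hf : ContDiff ℝ k (fun q : ℝ × ℝ × (Fin m → ℝ) => f q.1 q.2.1 q.2.2))
    (hg : ContDiff ℝ k (fun q : ℝ × ℝ × (Fin m → ℝ) => g q.1 q.2.1 q.2.2))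
    (a : ℝ) (ha : 0 < a)
    (τ₀ : ℝ) (hτ₀ : 0 < τ₀)
    (γ : ℝ → ℝ × ℝ) (hγsol : IsSolOn f g 0 γ (Set.Icc 0 τ₀))
    (hγ0 : γ 0 = (-a, 0)) (hγτ : γ τ₀ = (a, 0))
    (hγup : ∀ t ∈ Set.Ioo 0 τ₀, 0 < (γ t).2)
    (τp b c : ℝ) (hτp : τp ∈ Set.Ioo 0 τ₀) (hbc : γ τp = (b, c)) (hgbc : g b c 0 < 0)
    (ε₁ : ℝ) (hε₁ : 0 < ε₁) (U₁ : Set (Fin m → ℝ)) (hU₁ : U₁ ∈ 𝓝 (0 : Fin m → ℝ))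
    (τP σP τM σM : ℝ × ℝ → (Fin m → ℝ) → ℝ)
    (hτPc : ContDiffOn ℝ k (fun q : (ℝ × ℝ) × (Fin m → ℝ) => τP q.1 q.2)
      (Metric.ball ((-a, 0) : ℝ × ℝ) ε₁ ×ˢ U₁))
    (hσPc : ContDiffOn ℝ k (fun q : (ℝ × ℝ) × (Fin m → ℝ) => σP q.1 q.2)
      (Metric.ball ((-a, 0) : ℝ × ℝ) ε₁ ×ˢ U₁))
    (hτMc : ContDiffOn ℝ k (fun q : (ℝ × ℝ) × (Fin m → ℝ) => τM q.1 q.2)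
      (Metric.ball ((a, 0) : ℝ × ℝ) ε₁ ×ˢ U₁))
    (hσMc : ContDiffOn ℝ k (fun q : (ℝ × ℝ) × (Fin m → ℝ) => σM q.1 q.2)
      (Metric.ball ((a, 0) : ℝ × ℝ) ε₁ ×ˢ U₁))
    (hτPv : τP (-a, 0) 0 = τp) (hσPv : σP (-a, 0) 0 = b)
    (hτMv : τM (a, 0) 0 = τp - τ₀) (hσMv : σM (a, 0) 0 = b)
    (hP : ∀ p ∈ Metric.ball ((-a, 0) : ℝ × ℝ) ε₁, ∀ α ∈ U₁,
      0 < τP p α ∧ ∃ γ' : ℝ → ℝ × ℝ, IsSolOn f g α γ' (Set.Icc 0 (τP p α)) ∧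
        γ' 0 = p ∧ γ' (τP p α) = (σP p α, c))
    (hM : ∀ p ∈ Metric.ball ((a, 0) : ℝ × ℝ) ε₁, ∀ α ∈ U₁,
      τM p α < 0 ∧ ∃ γ' : ℝ → ℝ × ℝ, IsSolOn f g α γ' (Set.Icc (τM p α) 0) ∧
        γ' 0 = p ∧ γ' (τM p α) = (σM p α, c))
    :
    ∀ i : Fin m,
      sdA σP i (-a) 0 0 = -(kapF f g γ τp i) / g b c 0 ∧
      sdA σM i a 0 0 = -(kapF f g (fun t => γ (t + τ₀)) (τp - τ₀) i) / g b c 0 := by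
  intro i
  have h2k : ((2:ℕ) : WithTop ℕ∞) ≤ ((k:ℕ) : WithTop ℕ∞) := by exact_mod_cast (by omega : 2 ≤ k)
  have h1k : ((1:ℕ) : WithTop ℕ∞) ≤ ((k:ℕ) : WithTop ℕ∞) := by exact_mod_cast (by omega : 1 ≤ k)
  have hf2 : ContDiff ℝ 2 (fun q : ℝ × ℝ × (Fin m → ℝ) => f q.1 q.2.1 q.2.2) := hf.of_le h2k
  have hg2 : ContDiff ℝ 2 (fun q : ℝ × ℝ × (Fin m → ℝ) => g q.1 q.2.1 q.2.2) := hg.of_le h2k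
  have hne : g b c 0 ≠ 0 := ne_of_lt hgbc
  set e : Fin m → ℝ := Pi.single i 1 with he
  have h0e : ((0:ℝ) • e) = 0 := zero_smul _ _
  have hemem : ∀ᶠ s : ℝ in 𝓝 0, s • e ∈ U₁ := by
    have hcont : Continuous (fun s : ℝ => s • e) := continuous_id.smul continuous_const
    have htnd : Filter.Tendsto (fun s : ℝ => s • e) (𝓝 0) (𝓝 0) := by
      simpa [h0e] using hcont.tendsto 0
    exact htnd.eventually_mem hU₁
  have hsmul : HasDerivAt (fun s : ℝ => s • e) e 0 := by
    simpa using (hasDerivAt_id (0:ℝ)).smul_const e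
  constructor
  · -- the forward transition map σP
    have hballP : Metric.ball ((-a, 0) : ℝ × ℝ) ε₁ ×ˢ U₁ ∈ 𝓝 (((-a, 0) : ℝ × ℝ), (0 : Fin m → ℝ)) :=
      prod_mem_nhds (Metric.ball_mem_nhds _ hε₁) hU₁
    have hσPda : DifferentiableAt ℝ (σP ((-a, 0) : ℝ × ℝ)) 0 := by
      have h1 : DifferentiableAt ℝ (fun q : (ℝ × ℝ) × (Fin m → ℝ) => σP q.1 q.2)
          (((-a, 0) : ℝ × ℝ), (0 : Fin m → ℝ)) :=
        (hσPc.contDiffAt hballP).differentiableAt (by have hk0 : k ≠ 0 := (by omega); exact_mod_cast hk0)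
      exact h1.comp 0 ((differentiableAt_const _).prodMk differentiableAt_id)
    have hτPda : DifferentiableAt ℝ (τP ((-a, 0) : ℝ × ℝ)) 0 := by
      have h1 : DifferentiableAt ℝ (fun q : (ℝ × ℝ) × (Fin m → ℝ) => τP q.1 q.2)
          (((-a, 0) : ℝ × ℝ), (0 : Fin m → ℝ)) :=
        (hτPc.contDiffAt hballP).differentiableAt (by have hk0 : k ≠ 0 := (by omega); exact_mod_cast hk0)
      exact h1.comp 0 ((differentiableAt_const _).prodMk differentiableAt_id)
    have hSfnP : HasDerivAt (fun s : ℝ => σP (-a, 0) (s • e)) (sdA σP i (-a) 0 0) 0 := by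
      have h6 : HasFDerivAt (σP ((-a, 0) : ℝ × ℝ)) (fderiv ℝ (σP ((-a, 0) : ℝ × ℝ)) 0)
          ((fun s : ℝ => s • e) 0) := by
        simpa [h0e] using hσPda.hasFDerivAt
      simpa [sdA, he, Function.comp_def] using h6.comp_hasDerivAt 0 hsmul
    have hTfdaP : DifferentiableAt ℝ (fun s : ℝ => τP (-a, 0) (s • e)) 0 := by
      have h6 : HasFDerivAt (τP ((-a, 0) : ℝ × ℝ)) (fderiv ℝ (τP ((-a, 0) : ℝ × ℝ)) 0)
          ((fun s : ℝ => s • e) 0) := by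
        simpa [h0e] using hτPda.hasFDerivAt
      exact (h6.comp_hasDerivAt 0 hsmul).differentiableAt
    have hsolP : ∀ᶠ s in 𝓝 (0:ℝ), ∃ X : ℝ → ℝ × ℝ,
        IsSolOn f g (s • Pi.single i 1) X (Set.Icc 0 ((fun s : ℝ => τP (-a, 0) (s • e)) s)) ∧
          X 0 = γ 0 ∧ (X ((fun s : ℝ => τP (-a, 0) (s • e)) s)
            = ((fun s : ℝ => σP (-a, 0) (s • e)) s, c)) := by
      filter_upwards [hemem] with s hs
      obtain ⟨hpos, X, hX, hX0, hXT⟩ := hP (-a, 0) (Metric.mem_ball_self hε₁) (s • e) hs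
      exact ⟨X, hX, by rw [hγ0]; exact hX0, hXT⟩
    have hmP := Stmt2Aux.masterLem f g i hf2 hg2 τ₀ τp hτp.1 hτp.2 γ hγsol b c hbc hne
      (fun s : ℝ => τP (-a, 0) (s • e)) (fun s : ℝ => σP (-a, 0) (s • e))
      (by simp only [h0e]; exact hτPv) (by simp only [h0e]; exact hσPv)
      hTfdaP hSfnP.differentiableAt hsolP
    rw [← hSfnP.deriv]
    exact hmP
  · -- the backward transition map σM, via time reversal
    have hballM : Metric.ball ((a, 0) : ℝ × ℝ) ε₁ ×ˢ U₁ ∈ 𝓝 (((a, 0) : ℝ × ℝ), (0 : Fin m → ℝ)) :=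
      prod_mem_nhds (Metric.ball_mem_nhds _ hε₁) hU₁
    have hfN2 : ContDiff ℝ 2 (fun q : ℝ × ℝ × (Fin m → ℝ) =>
        (fun x y α => -f x y α) q.1 q.2.1 q.2.2) := hf2.neg
    have hgN2 : ContDiff ℝ 2 (fun q : ℝ × ℝ × (Fin m → ℝ) =>
        (fun x y α => -g x y α) q.1 q.2.1 q.2.2) := hg2.neg
    have hγN : IsSolOn (fun x y α => -f x y α) (fun x y α => -g x y α) 0
        (fun t => γ (τ₀ - t)) (Set.Icc 0 τ₀) := by
      intro t ht
      have h1 := hγsol (τ₀ - t) ⟨by linarith [ht.2], by linarith [ht.1]⟩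
      have h2 : HasDerivAt (fun t' : ℝ => τ₀ - t') (-1 : ℝ) t := by
        simpa using (hasDerivAt_id t).const_sub τ₀
      have h3 := h1.scomp t h2
      refine h3.congr_deriv ?_
      simp [Zv, Prod.ext_iff]
    have hσMda : DifferentiableAt ℝ (σM ((a, 0) : ℝ × ℝ)) 0 := by
      have h1 : DifferentiableAt ℝ (fun q : (ℝ × ℝ) × (Fin m → ℝ) => σM q.1 q.2)
          (((a, 0) : ℝ × ℝ), (0 : Fin m → ℝ)) :=
        (hσMc.contDiffAt hballM).differentiableAt (by have hk0 : k ≠ 0 := (by omega); exact_mod_cast hk0)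
      exact h1.comp 0 ((differentiableAt_const _).prodMk differentiableAt_id)
    have hτMda : DifferentiableAt ℝ (τM ((a, 0) : ℝ × ℝ)) 0 := by
      have h1 : DifferentiableAt ℝ (fun q : (ℝ × ℝ) × (Fin m → ℝ) => τM q.1 q.2)
          (((a, 0) : ℝ × ℝ), (0 : Fin m → ℝ)) :=
        (hτMc.contDiffAt hballM).differentiableAt (by have hk0 : k ≠ 0 := (by omega); exact_mod_cast hk0)
      exact h1.comp 0 ((differentiableAt_const _).prodMk differentiableAt_id)
    have hSfnM : HasDerivAt (fun s : ℝ => σM (a, 0) (s • e)) (sdA σM i a 0 0) 0 := by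
      have h6 : HasFDerivAt (σM ((a, 0) : ℝ × ℝ)) (fderiv ℝ (σM ((a, 0) : ℝ × ℝ)) 0)
          ((fun s : ℝ => s • e) 0) := by
        simpa [h0e] using hσMda.hasFDerivAt
      simpa [sdA, he, Function.comp_def] using h6.comp_hasDerivAt 0 hsmul
    have hTfdaM : DifferentiableAt ℝ (fun s : ℝ => -(τM (a, 0) (s • e))) 0 := by
      have h6 : HasFDerivAt (τM ((a, 0) : ℝ × ℝ)) (fderiv ℝ (τM ((a, 0) : ℝ × ℝ)) 0)
          ((fun s : ℝ => s • e) 0) := by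
        simpa [h0e] using hτMda.hasFDerivAt
      exact (h6.comp_hasDerivAt 0 hsmul).differentiableAt.neg
    have hsolM : ∀ᶠ s in 𝓝 (0:ℝ), ∃ X : ℝ → ℝ × ℝ,
        IsSolOn (fun x y α => -f x y α) (fun x y α => -g x y α) (s • Pi.single i 1) X
          (Set.Icc 0 ((fun s : ℝ => -(τM (a, 0) (s • e))) s)) ∧
          X 0 = (fun t => γ (τ₀ - t)) 0 ∧
          (X ((fun s : ℝ => -(τM (a, 0) (s • e))) s)
            = ((fun s : ℝ => σM (a, 0) (s • e)) s, c)) := by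
      filter_upwards [hemem] with s hs
      obtain ⟨hneg, X, hX, hX0, hXT⟩ := hM (a, 0) (Metric.mem_ball_self hε₁) (s • e) hs
      refine ⟨fun t => X (-t), ?_, ?_, ?_⟩
      · intro t ht
        have hmem : -t ∈ Set.Icc (τM (a, 0) (s • e)) 0 := ⟨by linarith [ht.2], by linarith [ht.1]⟩
        have h1 := hX (-t) hmem
        have h2 : HasDerivAt (fun t' : ℝ => -t') (-1 : ℝ) t := by
          simpa using (hasDerivAt_neg' t)
        have h3 := h1.scomp t h2
        refine h3.congr_deriv ?_
        simp [Zv, Prod.ext_iff, he]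
      · simp only [neg_zero, sub_zero]
        rw [hX0, hγτ]
      · simp only [neg_neg]
        exact hXT
    have hmM := Stmt2Aux.masterLem (fun x y α => -f x y α) (fun x y α => -g x y α) i hfN2 hgN2
      τ₀ (τ₀ - τp) (by linarith [hτp.2]) (by linarith [hτp.1])
      (fun t => γ (τ₀ - t)) hγN b c
      (by have hr : τ₀ - (τ₀ - τp) = τp := by ring
          show γ (τ₀ - (τ₀ - τp)) = (b, c)
          rw [hr]; exact hbc)
      (by simpa using hne)
      (fun s : ℝ => -(τM (a, 0) (s • e))) (fun s : ℝ => σM (a, 0) (s • e))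
      (by simp only [h0e]; rw [hτMv]; ring) (by simp only [h0e]; exact hσMv)
      hTfdaM hSfnM.differentiableAt hsolM
    rw [← hSfnM.deriv]
    rw [hmM]
    rw [Stmt2Aux.kapRev f g i γ τ₀ τp]
    rw [neg_neg]
    have hgN : (fun x y (α : Fin m → ℝ) => -g x y α) b c 0 = -(g b c 0) := rfl
    rw [div_neg, ← neg_div]
end
end

section
/- Assume (H1) and (H2)′ with f⁺(−a,0;0) > 0, and let ϑ₁⁻, ϑ₁⁺ be the smooth functions giving the unique zeros −ϑ₁⁻(α) and ϑ₁⁺(α) of g⁺(·,0;α) near ∓a. Define f^s(x;α) := g⁺(x,0;α)·f⁺(−x,0;α) − g⁺(−x,0;α)·f⁺(x,0;α). Then there exist a neighborhood U₅ of α = 0 and a smooth function ϖ : U₅ → ℝ with ϖ(α) = a + Σ_{i=1}^{m} [(g⁺_{αᵢ}(−a,0;0)f⁺(a,0;0) − g⁺_{αᵢ}(a,0;0)f⁺(−a,0;0))/(g⁺_x(−a,0;0)f⁺(a,0;0) + g⁺_x(a,0;0)f⁺(−a,0;0))] αᵢ + O(‖α‖²) such that for every α ∈ U₅ with ϑ₁⁻(α)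 ≠ ϑ₁⁺(α): x = −ϖ(α) is the unique zero of f^s(·;α) in the open interval with endpoints −ϑ₁⁻(α) and −ϑ₁⁺(α), and f^s_x(x;α) > 0 on that interval. -/
open scoped Topology BigOperators
open Set Asymptotics MeasureTheory intervalIntegral

noncomputable section

section Statement13Aux

variable {m : ℕ}

/-- Direction-`x` slice derivative. -/
lemma aux13_hasDerivAt_sliceX {h : ℝ → ℝ → (Fin m → ℝ) → ℝ}
    (hh : Differentiable ℝ (fun q : ℝ × ℝ × (Fin m → ℝ) => h q.1 q.2.1 q.2.2))
    (x y : ℝ) (α : Fin m → ℝ) :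
    HasDerivAt (fun x' => h x' y α) (pdX h x y α) x := by
  have hd : DifferentiableAt ℝ (fun x' : ℝ => h x' y α) x := by
    have : DifferentiableAt ℝ ((fun q : ℝ × ℝ × (Fin m → ℝ) => h q.1 q.2.1 q.2.2) ∘
        (fun x' : ℝ => (x', y, α))) x :=
      (hh _).comp x (differentiableAt_id.prodMk (differentiableAt_const _))
    exact this
  exact hd.hasDerivAt

lemma aux13_pdX_eq_fderiv {h : ℝ → ℝ → (Fin m → ℝ) → ℝ}
    (hh : Differentiable ℝ (fun q : ℝ × ℝ × (Fin m → ℝ) => h q.1 q.2.1 q.2.2))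
    (x y : ℝ) (α : Fin m → ℝ) :
    pdX h x y α = fderiv ℝ (fun q : ℝ × ℝ × (Fin m → ℝ) => h q.1 q.2.1 q.2.2) (x, y, α)
      ((1 : ℝ), (0 : ℝ), (0 : Fin m → ℝ)) := by
  have h1 : HasDerivAt (fun x' : ℝ => (x', y, α)) ((1:ℝ), (0:ℝ), (0 : Fin m → ℝ)) x := by
    have := (hasDerivAt_id x).prodMk (hasDerivAt_const x (y, α))
    convert this using 1 <;> simp [Prod.ext_iff]
  have h2 := ((hh (x, y, α)).hasFDerivAt).comp_hasDerivAt x h1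
  simpa [Function.comp_def, pdX] using h2.deriv

lemma aux13_continuous_pdX_slice {n : WithTop ℕ∞} {h : ℝ → ℝ → (Fin m → ℝ) → ℝ}
    (hh : ContDiff ℝ n (fun q : ℝ × ℝ × (Fin m → ℝ) => h q.1 q.2.1 q.2.2)) (hn : 1 ≤ n) :
    Continuous (fun p : ℝ × (Fin m → ℝ) => pdX h p.1 0 p.2) := by
  have : (fun p : ℝ × (Fin m → ℝ) => pdX h p.1 0 p.2) =
      fun p : ℝ × (Fin m → ℝ) =>
        (fderiv ℝ (fun q : ℝ × ℝ × (Fin m → ℝ) => h q.1 q.2.1 q.2.2) (p.1, 0, p.2))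
          ((1 : ℝ), (0 : ℝ), (0 : Fin m → ℝ)) := by
    funext p; exact aux13_pdX_eq_fderiv (hh.differentiable (ENat.one_le_iff_ne_zero_withTop.mp hn)) p.1 0 p.2
  rw [this]
  exact Continuous.clm_apply
    ((hh.continuous_fderiv (ENat.one_le_iff_ne_zero_withTop.mp hn)).comp
      (continuous_fst.prodMk (continuous_const.prodMk continuous_snd))) continuous_const

lemma aux13_hasFDerivAt_sliceA {h : ℝ → ℝ → (Fin m → ℝ) → ℝ}
    (hh : Differentiable ℝ (fun q : ℝ × ℝ × (Fin m → ℝ) => h q.1 q.2.1 q.2.2))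
    (x y : ℝ) (α : Fin m → ℝ) :
    HasFDerivAt (fun α' => h x y α') (fderiv ℝ (h x y) α) α := by
  have hd : DifferentiableAt ℝ (fun α' : Fin m → ℝ => h x y α') α := by
    have : DifferentiableAt ℝ ((fun q : ℝ × ℝ × (Fin m → ℝ) => h q.1 q.2.1 q.2.2) ∘
        (fun α' : Fin m → ℝ => (x, y, α'))) α :=
      (hh _).comp α ((differentiableAt_const _).prodMk
        ((differentiableAt_const _).prodMk differentiableAt_id))
    exact this
  exact hd.hasFDerivAt

/-- Explicit formula for the `x`-derivative of `fSlide`. -/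
def fDx (f g : ℝ → ℝ → (Fin m → ℝ) → ℝ) (x : ℝ) (α : Fin m → ℝ) : ℝ :=
  pdX g x 0 α * f (-x) 0 α + pdX g (-x) 0 α * f x 0 α
    - g x 0 α * pdX f (-x) 0 α - g (-x) 0 α * pdX f x 0 α

lemma aux13_hasDerivAt_fSlide {f g : ℝ → ℝ → (Fin m → ℝ) → ℝ}
    (hf : Differentiable ℝ (fun q : ℝ × ℝ × (Fin m → ℝ) => f q.1 q.2.1 q.2.2))
    (hg : Differentiable ℝ (fun q : ℝ × ℝ × (Fin m → ℝ) => g q.1 q.2.1 q.2.2))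
    (x : ℝ) (α : Fin m → ℝ) :
    HasDerivAt (fun x' => fSlide f g x' α) (fDx f g x α) x := by
  have hg1 := aux13_hasDerivAt_sliceX hg x 0 α
  have hf1 := aux13_hasDerivAt_sliceX hf x 0 α
  have hgneg : HasDerivAt (fun x' : ℝ => g (-x') 0 α) (pdX g (-x) 0 α * (-1)) x := by
    have := (aux13_hasDerivAt_sliceX hg (-x) 0 α).comp x (hasDerivAt_neg x)
    simpa [Function.comp_def] using this
  have hfneg : HasDerivAt (fun x' : ℝ => f (-x') 0 α) (pdX f (-x) 0 α * (-1)) x := by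
    have := (aux13_hasDerivAt_sliceX hf (-x) 0 α).comp x (hasDerivAt_neg x)
    simpa [Function.comp_def] using this
  have h := (hg1.mul hfneg).sub (hgneg.mul hf1)
  have h' : HasDerivAt (fun x' => fSlide f g x' α) _ x := h
  convert h' using 1
  simp [fDx]; ring

lemma aux13_continuous_fDx {n : WithTop ℕ∞} {f g : ℝ → ℝ → (Fin m → ℝ) → ℝ}
    (hf : ContDiff ℝ n (fun q : ℝ × ℝ × (Fin m → ℝ) => f q.1 q.2.1 q.2.2))
    (hg : ContDiff ℝ n (fun q : ℝ × ℝ × (Fin m → ℝ) => g q.1 q.2.1 q.2.2))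
    (hn : 1 ≤ n) :
    Continuous (fun p : ℝ × (Fin m → ℝ) => fDx f g p.1 p.2) := by
  have hnegmap : Continuous (fun p : ℝ × (Fin m → ℝ) => ((-p.1, p.2) : ℝ × (Fin m → ℝ))) :=
    continuous_fst.neg.prodMk continuous_snd
  have c1 := aux13_continuous_pdX_slice hg hn
  have c1' : Continuous (fun p : ℝ × (Fin m → ℝ) => pdX g (-p.1) 0 p.2) := c1.comp hnegmap
  have c2 := aux13_continuous_pdX_slice hf hn
  have c2' : Continuous (fun p : ℝ × (Fin m → ℝ) => pdX f (-p.1) 0 p.2) := c2.comp hnegmap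
  have c3 : Continuous (fun p : ℝ × (Fin m → ℝ) => f p.1 0 p.2) :=
    hf.continuous.comp (continuous_fst.prodMk (continuous_const.prodMk continuous_snd))
  have c3' : Continuous (fun p : ℝ × (Fin m → ℝ) => f (-p.1) 0 p.2) := c3.comp hnegmap
  have c4 : Continuous (fun p : ℝ × (Fin m → ℝ) => g p.1 0 p.2) :=
    hg.continuous.comp (continuous_fst.prodMk (continuous_const.prodMk continuous_snd))
  have c4' : Continuous (fun p : ℝ × (Fin m → ℝ) => g (-p.1) 0 p.2) := c4.comp hnegmap
  exact (((c1.mul c3').add (c1'.mul c3)).sub (c4.mul c2')).sub (c4'.mul c2)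

end Statement13Aux


set_option maxHeartbeats 1000000 in
/-- the pseudo-equilibrium: there is a smooth `ϖ(α)` with the stated
linear expansion such that whenever `ϑ₁⁻(α) ≠ ϑ₁⁺(α)`, `x = −ϖ(α)` is the unique zero
of `f^s(·;α) = g⁺(·,0;α)f⁺(−·,0;α) − g⁺(−·,0;α)f⁺(·,0;α)` in the open interval with
endpoints `−ϑ₁⁻(α)` and `−ϑ₁⁺(α)`, and `f^s_x > 0` on that interval. -/

theorem statement13
    (m k : ℕ) (hk : 3 ≤ k)
    (f g : ℝ → ℝ → (Fin m → ℝ) → ℝ)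
    (hf : ContDiff ℝ k (fun q : ℝ × ℝ × (Fin m → ℝ) => f q.1 q.2.1 q.2.2))
    (hg : ContDiff ℝ k (fun q : ℝ × ℝ × (Fin m → ℝ) => g q.1 q.2.1 q.2.2))
    (a : ℝ) (ha : 0 < a)
    (hfma : 0 < f (-a) 0 0)
    (H1a : g (-a) 0 0 = 0) (H1b : 0 < f (-a) 0 0 * pdX g (-a) 0 0)
    (H2'g : g a 0 0 = 0) (H2'fx : 0 < f a 0 0 * pdX g a 0 0)
    (H2'ff : 0 < f (-a) 0 0 * f a 0 0)
    (ϑm ϑp : (Fin m → ℝ) → ℝ) (U₀ : Set (Fin m → ℝ)) (hU₀ : U₀ ∈ 𝓝 (0 : Fin m → ℝ))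
    (hϑmc : ContDiffOn ℝ k ϑm U₀) (hϑpc : ContDiffOn ℝ k ϑp U₀)
    (hϑm0 : ϑm 0 = a) (hϑp0 : ϑp 0 = a)
    (hϑmz : ∀ α ∈ U₀, g (-(ϑm α)) 0 α = 0)
    (hϑpz : ∀ α ∈ U₀, g (ϑp α) 0 α = 0)
    :
    ∃ U₅ ∈ 𝓝 (0 : Fin m → ℝ), ∃ ϖ : (Fin m → ℝ) → ℝ,
      ContDiffOn ℝ k ϖ U₅ ∧
      (fun α => ϖ α - (a + ∑ i,
          (pdA g i (-a) 0 0 * f a 0 0 - pdA g i a 0 0 * f (-a) 0 0) /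
            (pdX g (-a) 0 0 * f a 0 0 + pdX g a 0 0 * f (-a) 0 0) * α i))
        =O[𝓝 0] (fun α => ‖α‖ ^ 2) ∧
      ∀ α ∈ U₅, ϑm α ≠ ϑp α →
        -(ϖ α) ∈ Set.Ioo (min (-(ϑm α)) (-(ϑp α))) (max (-(ϑm α)) (-(ϑp α))) ∧
        fSlide f g (-(ϖ α)) α = 0 ∧
        (∀ x ∈ Set.Ioo (min (-(ϑm α)) (-(ϑp α))) (max (-(ϑm α)) (-(ϑp α))),
          fSlide f g x α = 0 → x = -(ϖ α)) ∧
        (∀ x ∈ Set.Ioo (min (-(ϑm α)) (-(ϑp α))) (max (-(ϑm α)) (-(ϑp α))),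
          0 < deriv (fun x' => fSlide f g x' α) x) := by
  classical
  have hkW : (1 : WithTop ℕ∞) ≤ (k : WithTop ℕ∞) := by
    exact_mod_cast Nat.one_le_iff_ne_zero.mpr (by omega)
  have hfd : Differentiable ℝ (fun q : ℝ × ℝ × (Fin m → ℝ) => f q.1 q.2.1 q.2.2) :=
    hf.differentiable (ENat.one_le_iff_ne_zero_withTop.mp hkW)
  have hgd : Differentiable ℝ (fun q : ℝ × ℝ × (Fin m → ℝ) => g q.1 q.2.1 q.2.2) :=
    hg.differentiable (ENat.one_le_iff_ne_zero_withTop.mp hkW)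
  -- basic sign facts
  have hgxma : 0 < pdX g (-a) 0 0 := by nlinarith
  have hfpa : 0 < f a 0 0 := by nlinarith
  have hgxpa : 0 < pdX g a 0 0 := by nlinarith
  set D : ℝ := pdX g (-a) 0 0 * f a 0 0 + pdX g a 0 0 * f (-a) 0 0 with hDdef
  have hD : 0 < D := by positivity
  have hgnna : g (-(-a)) 0 0 = 0 := by rw [neg_neg]; exact H2'g
  -- the function F and its smoothness
  set F : ℝ × (Fin m → ℝ) → ℝ := fun p => fSlide f g p.1 p.2 with hFdef
  have hF : ContDiff ℝ k F := by
    have e1 : ContDiff ℝ k (fun p : ℝ × (Fin m → ℝ) => (p.1, (0:ℝ), p.2)) :=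
      contDiff_fst.prodMk (contDiff_const.prodMk contDiff_snd)
    have e2 : ContDiff ℝ k (fun p : ℝ × (Fin m → ℝ) => (-p.1, (0:ℝ), p.2)) :=
      contDiff_fst.neg.prodMk (contDiff_const.prodMk contDiff_snd)
    exact ((hg.comp e1).mul (hf.comp e2)).sub ((hg.comp e2).mul (hf.comp e1))
  set p₀ : ℝ × (Fin m → ℝ) := (-a, 0) with hp₀def
  have hFp₀ : F p₀ = 0 := by
    simp only [hFdef, fSlide, hp₀def, neg_neg, H1a, H2'g]; ring
  set A : (ℝ × (Fin m → ℝ)) →L[ℝ] ℝ := fderiv ℝ F p₀ with hAdef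
  have hA : HasFDerivAt F A p₀ := ((hF.differentiable (ENat.one_le_iff_ne_zero_withTop.mp hkW)) p₀).hasFDerivAt
  -- value of A on (1,0)
  have hfDxma : fDx f g (-a) 0 = D := by
    simp only [fDx, neg_neg, H1a, H2'g, hDdef]; ring
  have hA10 : A ((1:ℝ), (0:(Fin m → ℝ))) = D := by
    have h1 : HasDerivAt (fun x' : ℝ => (x', (0:(Fin m → ℝ)))) ((1:ℝ), (0:(Fin m → ℝ))) (-a) := by
      simpa using (hasDerivAt_id (-a)).prodMk (hasDerivAt_const (-a) (0:(Fin m → ℝ)))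
    have h2 : HasDerivAt (fun x' : ℝ => F (x', (0:(Fin m → ℝ)))) (A ((1:ℝ), (0:(Fin m → ℝ)))) (-a) := by
      have := hA.comp_hasDerivAt (-a) h1
      simpa [Function.comp_def] using this
    have h3 : HasDerivAt (fun x' : ℝ => F (x', (0:(Fin m → ℝ)))) (fDx f g (-a) 0) (-a) :=
      aux13_hasDerivAt_fSlide hfd hgd (-a) 0
    rw [h2.unique h3, hfDxma]
  -- value of A on (0, single i 1)
  set Gm : (Fin m → ℝ) →L[ℝ] ℝ := fderiv ℝ (g (-a) 0) (0:(Fin m → ℝ)) with hGmdef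
  set Gp : (Fin m → ℝ) →L[ℝ] ℝ := fderiv ℝ (g (-(-a)) 0) (0:(Fin m → ℝ)) with hGpdef
  have hA0i : ∀ i : Fin m, A ((0:ℝ), Pi.single i 1) =
      f a 0 0 * pdA g i (-a) 0 0 - f (-a) 0 0 * pdA g i a 0 0 := by
    have h1 : HasFDerivAt (fun α' : (Fin m → ℝ) => g (-a) 0 α') Gm 0 :=
      aux13_hasFDerivAt_sliceA hgd (-a) 0 0
    have h2 : HasFDerivAt (fun α' : (Fin m → ℝ) => f (-(-a)) 0 α')
        (fderiv ℝ (f (-(-a)) 0) (0:(Fin m → ℝ))) 0 := aux13_hasFDerivAt_sliceA hfd (-(-a)) 0 0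
    have h3 : HasFDerivAt (fun α' : (Fin m → ℝ) => g (-(-a)) 0 α') Gp 0 :=
      aux13_hasFDerivAt_sliceA hgd (-(-a)) 0 0
    have h4 : HasFDerivAt (fun α' : (Fin m → ℝ) => f (-a) 0 α')
        (fderiv ℝ (f (-a) 0) (0:(Fin m → ℝ))) 0 := aux13_hasFDerivAt_sliceA hfd (-a) 0 0
    have hC : HasFDerivAt (fun α' : (Fin m → ℝ) => F (-a, α'))
        (f (-(-a)) 0 0 • Gm - f (-a) 0 0 • Gp) 0 := by
      have h := (h1.mul h2).sub (h3.mul h4)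
      have heq : (g (-a) 0 0 • fderiv ℝ (f (-(-a)) 0) (0:(Fin m → ℝ)) + f (-(-a)) 0 0 • Gm) -
          (g (-(-a)) 0 0 • fderiv ℝ (f (-a) 0) (0:(Fin m → ℝ)) + f (-a) 0 0 • Gp)
          = f (-(-a)) 0 0 • Gm - f (-a) 0 0 • Gp := by
        rw [H1a, hgnna]; simp
      rw [heq] at h
      exact h
    have hslice : HasFDerivAt (fun α' : (Fin m → ℝ) => F (-a, α'))
        (A.comp (ContinuousLinearMap.inr ℝ ℝ (Fin m → ℝ))) 0 := by
      have hj : HasFDerivAt (fun α' : (Fin m → ℝ) => ((-a : ℝ), α'))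
          (ContinuousLinearMap.inr ℝ ℝ (Fin m → ℝ)) 0 := hasFDerivAt_prodMk_right (-a) 0
      have := hA.comp (0:(Fin m → ℝ)) hj
      simpa [Function.comp_def] using this
    have hu := hslice.unique hC
    intro i
    have := congrArg (fun (L : (Fin m → ℝ) →L[ℝ] ℝ) => L (Pi.single i 1)) hu
    simp only [ContinuousLinearMap.comp_apply, ContinuousLinearMap.inr_apply,
      ContinuousLinearMap.sub_apply, ContinuousLinearMap.smul_apply, smul_eq_mul] at this
    rw [this]
    have e1 : Gm (Pi.single i 1) = pdA g i (-a) 0 0 := rfl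
    have e2 : Gp (Pi.single i 1) = pdA g i a 0 0 := by
      rw [hGpdef]; rw [neg_neg]; rfl
    rw [e1, e2, neg_neg]
  -- the linear equivalence (x, α) ↦ (A (x, α), α)
  have key : ∀ v : ℝ × (Fin m → ℝ), A v = v.1 * D + A ((0:ℝ), v.2) := by
    intro v
    have hv : v = v.1 • ((1:ℝ), (0:(Fin m → ℝ))) + ((0:ℝ), v.2) := by
      ext <;> simp
    calc A v = A (v.1 • ((1:ℝ), (0:(Fin m → ℝ))) + ((0:ℝ), v.2)) := by rw [← hv]
    _ = v.1 * A ((1:ℝ), (0:(Fin m → ℝ))) + A ((0:ℝ), v.2) := by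
        rw [map_add, A.map_smul]; simp
    _ = v.1 * D + A ((0:ℝ), v.2) := by rw [hA10]
  have hD0 : D ≠ 0 := ne_of_gt hD
  let Elin : (ℝ × (Fin m → ℝ)) ≃ₗ[ℝ] (ℝ × (Fin m → ℝ)) :=
  { toFun := fun v => (A v, v.2)
    map_add' := by intro v w; simp [Prod.ext_iff]
    map_smul' := by intro c v; simp [Prod.ext_iff]
    invFun := fun w => ((w.1 - A ((0:ℝ), w.2)) / D, w.2)
    left_inv := by
      intro v
      have := key v
      refine Prod.ext ?_ rfl
      simp only
      rw [this]
      field_simp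
      ring
    right_inv := by
      intro w
      refine Prod.ext ?_ rfl
      simp only
      rw [key (((w.1 - A ((0:ℝ), w.2)) / D), w.2)]
      field_simp
      ring }
  let E : (ℝ × (Fin m → ℝ)) ≃L[ℝ] (ℝ × (Fin m → ℝ)) := Elin.toContinuousLinearEquiv
  -- the map Φ and the inverse function theorem
  set Φ : ℝ × (Fin m → ℝ) → ℝ × (Fin m → ℝ) := fun p => (F p, p.2) with hΦdef
  have hΦ : ContDiffAt ℝ k Φ p₀ := (hF.prodMk contDiff_snd).contDiffAt
  have hΦd : HasFDerivAt Φ (E : (ℝ × (Fin m → ℝ)) →L[ℝ] (ℝ × (Fin m → ℝ))) p₀ := by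
    have h1 : HasFDerivAt Φ (A.prod (ContinuousLinearMap.snd ℝ ℝ (Fin m → ℝ))) p₀ :=
      hA.prodMk hasFDerivAt_snd
    have h2 : (E : (ℝ × (Fin m → ℝ)) →L[ℝ] (ℝ × (Fin m → ℝ)))
        = A.prod (ContinuousLinearMap.snd ℝ ℝ (Fin m → ℝ)) := by
      apply ContinuousLinearMap.ext; intro v; rfl
    rw [h2]; exact h1
  have hΦp₀ : Φ p₀ = ((0:ℝ), (0:(Fin m → ℝ))) := by
    simp only [hΦdef, hFp₀, hp₀def]
    exact Prod.ext hFp₀ rfl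
  set ψ : ℝ × (Fin m → ℝ) → ℝ × (Fin m → ℝ) := hΦ.localInverse hΦd (ENat.one_le_iff_ne_zero_withTop.mp hkW) with hψdef
  have hψc : ContDiffAt ℝ k ψ ((0:ℝ), (0:(Fin m → ℝ))) := by
    have := hΦ.to_localInverse (f' := E) hΦd (ENat.one_le_iff_ne_zero_withTop.mp hkW)
    rwa [hΦp₀] at this
  have hSt : HasStrictFDerivAt Φ (E : (ℝ × (Fin m → ℝ)) →L[ℝ] (ℝ × (Fin m → ℝ))) p₀ :=
    hΦ.hasStrictFDerivAt' hΦd (ENat.one_le_iff_ne_zero_withTop.mp hkW)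
  have hψeq : ψ = hSt.localInverse Φ E p₀ := rfl
  have hψ0 : ψ ((0:ℝ), (0:(Fin m → ℝ))) = p₀ := by
    have := hΦ.localInverse_apply_image (f' := E) hΦd (ENat.one_le_iff_ne_zero_withTop.mp hkW)
    rwa [hΦp₀] at this
  have hψd : HasStrictFDerivAt ψ
      ((E.symm : (ℝ × (Fin m → ℝ)) →L[ℝ] (ℝ × (Fin m → ℝ))))
      ((0:ℝ), (0:(Fin m → ℝ))) := by
    have := hSt.to_localInverse
    rw [hΦp₀] at this
    rw [hψeq]
    exact this
  have hrinv : ∀ᶠ w in 𝓝 ((0:ℝ), (0:(Fin m → ℝ))), Φ (ψ w) = w := by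
    have := hSt.eventually_right_inverse
    rw [hΦp₀] at this
    rw [hψeq]
    exact this
  -- the pseudo-equilibrium function
  set ϖ : (Fin m → ℝ) → ℝ := fun α => -((ψ ((0:ℝ), α)).1) with hϖdef
  have hj : ContDiff ℝ k (fun α : Fin m → ℝ => (((0:ℝ), α) : ℝ × (Fin m → ℝ))) :=
    contDiff_const.prodMk contDiff_id
  have hϖc : ContDiffAt ℝ k ϖ 0 := by
    have h1 : ContDiffAt ℝ k (fun α : Fin m → ℝ => ψ ((0:ℝ), α)) 0 :=
      hψc.comp 0 hj.contDiffAt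
    exact (contDiff_fst.contDiffAt.comp 0 h1).neg
  have hϖ0 : ϖ 0 = a := by
    simp only [hϖdef]
    rw [hψ0, hp₀def, neg_neg]
  have hϖzero : ∀ᶠ α in 𝓝 (0:(Fin m → ℝ)), fSlide f g (-(ϖ α)) α = 0 := by
    have hjt : Filter.Tendsto (fun α : Fin m → ℝ => (((0:ℝ), α) : ℝ × (Fin m → ℝ)))
        (𝓝 0) (𝓝 ((0:ℝ), (0:(Fin m → ℝ)))) := by
      have := hj.continuous.tendsto (0:(Fin m → ℝ))
      exact this
    filter_upwards [hjt.eventually hrinv] with α hα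
    have h2 : (ψ ((0:ℝ), α)).2 = α := congrArg Prod.snd hα
    have h1 : F (ψ ((0:ℝ), α)) = 0 := congrArg Prod.fst hα
    have h3 : ψ ((0:ℝ), α) = ((ψ ((0:ℝ), α)).1, α) := Prod.ext rfl h2
    rw [h3] at h1
    have h4 : -(ϖ α) = (ψ ((0:ℝ), α)).1 := by simp [hϖdef]
    rw [h4]
    exact h1
  -- the derivative of ϖ at 0
  set DW : (Fin m → ℝ) →L[ℝ] ℝ :=
    (-(ContinuousLinearMap.fst ℝ ℝ (Fin m → ℝ))).comp
      (((E.symm : (ℝ × (Fin m → ℝ)) →L[ℝ] (ℝ × (Fin m → ℝ)))).comp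
        (ContinuousLinearMap.inr ℝ ℝ (Fin m → ℝ))) with hDWdef
  have hEsymm : ∀ w : ℝ × (Fin m → ℝ),
      E.symm w = ((w.1 - A ((0:ℝ), w.2)) / D, w.2) := fun w => rfl
  have hDWval : ∀ β : Fin m → ℝ, DW β = A ((0:ℝ), β) / D := by
    intro β
    have : DW β = -(((E.symm : (ℝ × (Fin m → ℝ)) →L[ℝ] (ℝ × (Fin m → ℝ)))
        ((0:ℝ), β)).1) := rfl
    rw [this]
    have h2 : ((E.symm : (ℝ × (Fin m → ℝ)) →L[ℝ] (ℝ × (Fin m → ℝ))) ((0:ℝ), β))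
        = E.symm ((0:ℝ), β) := rfl
    rw [h2, hEsymm]
    simp only
    field_simp
    ring
  have hϖderiv : HasFDerivAt ϖ DW 0 := by
    have hjd : HasFDerivAt (fun α : Fin m → ℝ => (((0:ℝ), α) : ℝ × (Fin m → ℝ)))
        (ContinuousLinearMap.inr ℝ ℝ (Fin m → ℝ)) 0 := hasFDerivAt_prodMk_right 0 0
    have h1 : HasFDerivAt (fun α : Fin m → ℝ => ψ ((0:ℝ), α))
        ((E.symm : (ℝ × (Fin m → ℝ)) →L[ℝ] (ℝ × (Fin m → ℝ))).comp
          (ContinuousLinearMap.inr ℝ ℝ (Fin m → ℝ))) 0 := by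
      have := hψd.hasFDerivAt.comp (0 : Fin m → ℝ) hjd
      simpa [Function.comp_def] using this
    have h2 : HasFDerivAt (fun p : ℝ × (Fin m → ℝ) => -p.1)
        (-(ContinuousLinearMap.fst ℝ ℝ (Fin m → ℝ))) (ψ ((0:ℝ), (0:(Fin m → ℝ)))) :=
      hasFDerivAt_fst.neg
    have := h2.comp (0 : Fin m → ℝ) h1
    simpa [Function.comp_def, hDWdef] using this
  have hfderivϖ0 : fderiv ℝ ϖ 0 = DW := hϖderiv.fderiv
  -- the sum formula for DW
  have hDWsum : ∀ β : Fin m → ℝ, DW β = ∑ i,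
      (pdA g i (-a) 0 0 * f a 0 0 - pdA g i a 0 0 * f (-a) 0 0) / D * β i := by
    intro β
    have hβ : (((0:ℝ), β) : ℝ × (Fin m → ℝ))
        = ∑ i, (β i) • (((0:ℝ), (Pi.single i 1 : Fin m → ℝ))) := by
      have hsnd : β = ∑ i, (β i) • (Pi.single i 1 : Fin m → ℝ) := by
        have h1 : ∀ i : Fin m, (β i) • (Pi.single i 1 : Fin m → ℝ)
            = Pi.single i (β i) := by
          intro i; ext j; by_cases hji : j = i <;>
            simp [Pi.single_apply, hji]
        rw [Finset.sum_congr rfl (fun i _ => h1 i)]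
        exact (Finset.univ_sum_single β).symm
      rw [Prod.ext_iff]
      constructor
      · simp [Prod.fst_sum]
      · simp only [Prod.snd_sum, Prod.smul_mk, smul_zero]
        exact hsnd
    have h3 : A ((0:ℝ), β) = ∑ i, (β i) *
        (f a 0 0 * pdA g i (-a) 0 0 - f (-a) 0 0 * pdA g i a 0 0) := by
      rw [hβ, map_sum]
      refine Finset.sum_congr rfl fun i _ => ?_
      rw [A.map_smul, hA0i i, smul_eq_mul]
    rw [hDWval, h3, Finset.sum_div]
    refine Finset.sum_congr rfl fun i _ => ?_
    field_simp
  -- big-O estimate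
  have hBigO : (fun α => ϖ α - ϖ 0 - DW α) =O[𝓝 (0:(Fin m → ℝ))]
      (fun α : Fin m → ℝ => ‖α‖ ^ 2) := by
    have hϖc2 : ContDiffAt ℝ 2 ϖ 0 :=
      hϖc.of_le (by exact_mod_cast (by omega : 2 ≤ k))
    obtain ⟨u, hu, hϖu⟩ := hϖc2.contDiffOn (le_refl (2 : WithTop ℕ∞))
      (by intro h; exact absurd h (by norm_num))
    have hfd1 : ContDiffAt ℝ 1 (fderiv ℝ ϖ) 0 :=
      hϖc2.fderiv_right (by norm_num)
    have hO := (hfd1.differentiableAt (by norm_num)).hasFDerivAt.isBigO_sub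
    rcases hO.bound with ⟨C, hC⟩
    obtain ⟨r, hr0, hrsub⟩ := Metric.mem_nhds_iff.1 (Filter.inter_mem hu hC)
    rw [Asymptotics.isBigO_iff]
    refine ⟨|C|, ?_⟩
    filter_upwards [Metric.ball_mem_nhds (0:(Fin m → ℝ)) hr0] with α hα
    have hsub : segment ℝ (0:(Fin m → ℝ)) α ⊆ Metric.ball 0 r :=
      (convex_ball (0:(Fin m → ℝ)) r).segment_subset (Metric.mem_ball_self hr0) hα
    have hdiff : ∀ x ∈ segment ℝ (0:(Fin m → ℝ)) α,
        HasFDerivWithinAt (fun β => ϖ β - DW β) (fderiv ℝ ϖ x - DW)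
          (segment ℝ (0:(Fin m → ℝ)) α) x := by
      intro x hx
      have hxb : x ∈ Metric.ball (0:(Fin m → ℝ)) r := hsub hx
      have hun : u ∈ 𝓝 x := Filter.mem_of_superset
        (Metric.isOpen_ball.mem_nhds hxb)
        (fun z hz => (hrsub hz).1)
      have h1 : DifferentiableAt ℝ ϖ x :=
        (hϖu.differentiableOn (by norm_num)).differentiableAt hun
      exact ((h1.hasFDerivAt).sub DW.hasFDerivAt).hasFDerivWithinAt
    have hbound : ∀ x ∈ segment ℝ (0:(Fin m → ℝ)) α,
        ‖fderiv ℝ ϖ x - DW‖ ≤ |C| * ‖α‖ := by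
      intro x hx
      have hxb : x ∈ Metric.ball (0:(Fin m → ℝ)) r := hsub hx
      have hb := (hrsub hxb).2
      simp only [Set.mem_setOf_eq, sub_zero] at hb
      rw [hfderivϖ0] at hb
      have hxn : ‖x‖ ≤ ‖α‖ := by
        rcases hx with ⟨u', v', hu', hv', huv, rfl⟩
        have : ‖u' • (0:(Fin m → ℝ)) + v' • α‖ = v' * ‖α‖ := by
          rw [smul_zero, zero_add, norm_smul, Real.norm_of_nonneg hv']
        rw [this]
        nlinarith [norm_nonneg α]
      calc ‖fderiv ℝ ϖ x - DW‖ ≤ C * ‖x‖ := hb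
      _ ≤ |C| * ‖α‖ := by
          have h1 : C * ‖x‖ ≤ |C| * ‖x‖ :=
            mul_le_mul_of_nonneg_right (le_abs_self C) (norm_nonneg x)
          have h2 : |C| * ‖x‖ ≤ |C| * ‖α‖ :=
            mul_le_mul_of_nonneg_left hxn (abs_nonneg C)
          linarith
    have hmvt := Convex.norm_image_sub_le_of_norm_hasFDerivWithin_le hdiff hbound
      (convex_segment (0:(Fin m → ℝ)) α) (left_mem_segment ℝ 0 α)
      (right_mem_segment ℝ 0 α)
    have hDW0 : DW (0:(Fin m → ℝ)) = 0 := map_zero DW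
    rw [hDW0, sub_zero, sub_zero] at hmvt
    have heq : ϖ α - DW α - ϖ 0 = ϖ α - ϖ 0 - DW α := by ring
    rw [heq] at hmvt
    calc ‖ϖ α - ϖ 0 - DW α‖ ≤ |C| * ‖α‖ * ‖α‖ := hmvt
    _ = |C| * ‖‖α‖ ^ 2‖ := by
        rw [Real.norm_of_nonneg (by positivity)]
        ring
  -- the open set of good points
  set S : Set (ℝ × (Fin m → ℝ)) := {p | 0 < fDx f g p.1 p.2} ∩
      ({p | 0 < pdX g p.1 0 p.2} ∩ {p | 0 < f p.1 0 p.2}) with hSdef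
  have hSopen : IsOpen S :=
    (isOpen_lt continuous_const (aux13_continuous_fDx hf hg hkW)).inter
      ((isOpen_lt continuous_const (aux13_continuous_pdX_slice hg hkW)).inter
        (isOpen_lt continuous_const (hf.continuous.comp
          (continuous_fst.prodMk (continuous_const.prodMk continuous_snd)))))
  have hma : ((-a : ℝ), (0:(Fin m → ℝ))) ∈ S := by
    refine ⟨?_, hgxma, hfma⟩
    show 0 < fDx f g (-a) 0
    rw [hfDxma]; exact hD
  have hfDxpa : fDx f g a 0 = D := by
    simp only [fDx, H1a, H2'g, hDdef]; ring
  have hpa : ((a : ℝ), (0:(Fin m → ℝ))) ∈ S := by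
    refine ⟨?_, hgxpa, hfpa⟩
    show 0 < fDx f g a 0
    rw [hfDxpa]; exact hD
  obtain ⟨u₁, hu₁, v₁, hv₁, huv₁⟩ := mem_nhds_prod_iff.1 (hSopen.mem_nhds hma)
  obtain ⟨ε₁, hε₁, hball₁⟩ := Metric.mem_nhds_iff.1 hu₁
  obtain ⟨u₂, hu₂, v₂, hv₂, huv₂⟩ := mem_nhds_prod_iff.1 (hSopen.mem_nhds hpa)
  obtain ⟨ε₂, hε₂, hball₂⟩ := Metric.mem_nhds_iff.1 hu₂
  set ε := min ε₁ ε₂ with hεdef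
  have hε : 0 < ε := lt_min hε₁ hε₂
  have hS1 : ∀ (x : ℝ) (α : Fin m → ℝ), x ∈ Metric.ball (-a) ε → α ∈ v₁ →
      (x, α) ∈ S := fun x α hx hα =>
    huv₁ ⟨hball₁ (Metric.ball_subset_ball (min_le_left _ _) hx), hα⟩
  have hS2 : ∀ (x : ℝ) (α : Fin m → ℝ), x ∈ Metric.ball a ε → α ∈ v₂ →
      (x, α) ∈ S := fun x α hx hα =>
    huv₂ ⟨hball₂ (Metric.ball_subset_ball (min_le_right _ _) hx), hα⟩
  -- neighborhood pieces
  have hTm : ϑm ⁻¹' Metric.ball a ε ∈ 𝓝 (0:(Fin m → ℝ)) := by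
    refine (hϑmc.contDiffAt hU₀).continuousAt.preimage_mem_nhds ?_
    rw [hϑm0]; exact Metric.ball_mem_nhds _ hε
  have hTp : ϑp ⁻¹' Metric.ball a ε ∈ 𝓝 (0:(Fin m → ℝ)) := by
    refine (hϑpc.contDiffAt hU₀).continuousAt.preimage_mem_nhds ?_
    rw [hϑp0]; exact Metric.ball_mem_nhds _ hε
  have hWb : ϖ ⁻¹' Metric.ball a ε ∈ 𝓝 (0:(Fin m → ℝ)) := by
    refine hϖc.continuousAt.preimage_mem_nhds ?_
    rw [hϖ0]; exact Metric.ball_mem_nhds _ hε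
  obtain ⟨usm, husm, hϖsm⟩ := hϖc.contDiffOn (le_refl (k : WithTop ℕ∞))
    (by intro h; exact absurd h (by norm_num))
  set U₅ : Set (Fin m → ℝ) := v₁ ∩ v₂ ∩ U₀ ∩ (ϑm ⁻¹' Metric.ball a ε) ∩
      (ϑp ⁻¹' Metric.ball a ε) ∩ (ϖ ⁻¹' Metric.ball a ε) ∩
      {α | fSlide f g (-(ϖ α)) α = 0} ∩ usm with hU₅def
  have hU₅ : U₅ ∈ 𝓝 (0:(Fin m → ℝ)) := by
    refine Filter.inter_mem (Filter.inter_mem (Filter.inter_mem (Filter.inter_mem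
      (Filter.inter_mem (Filter.inter_mem (Filter.inter_mem hv₁ hv₂) hU₀) hTm) hTp)
      hWb) hϖzero) husm
  refine ⟨U₅, hU₅, ϖ, hϖsm.mono (fun z hz => hz.2), ?_, ?_⟩
  · -- big-O clause
    have hfun : (fun α => ϖ α - (a + ∑ i,
        (pdA g i (-a) 0 0 * f a 0 0 - pdA g i a 0 0 * f (-a) 0 0) / D * α i))
        = fun α => ϖ α - ϖ 0 - DW α := by
      funext α
      rw [hϖ0, hDWsum α]
      ring
    rw [hfun]
    exact hBigO
  · -- the main clause
    intro α hα hne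
    obtain ⟨⟨⟨⟨⟨⟨⟨hαv₁, hαv₂⟩, hαU₀⟩, htm⟩, htp⟩, hϖb⟩, hz⟩, -⟩ := hα
    rw [Set.mem_preimage] at htm htp hϖb
    rw [Set.mem_setOf_eq] at hz
    set tm := ϑm α with htmdef
    set tp := ϑp α with htpdef
    have hnegball : ∀ t : ℝ, t ∈ Metric.ball a ε → -t ∈ Metric.ball (-a) ε := by
      intro t ht
      rw [Metric.mem_ball, Real.dist_eq] at ht ⊢
      rw [show -t - -a = -(t - a) by ring, abs_neg]
      exact ht
    have hmb : -tm ∈ Metric.ball (-a) ε := hnegball tm htm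
    have hpb : -tp ∈ Metric.ball (-a) ε := hnegball tp htp
    have hϖnb : -(ϖ α) ∈ Metric.ball (-a) ε := hnegball _ hϖb
    -- strict monotonicity of fSlide near -a
    have SMOF : StrictMonoOn (fun x => fSlide f g x α) (Metric.ball (-a) ε) := by
      apply strictMonoOn_of_deriv_pos (convex_ball _ _)
      · exact (Differentiable.continuous (fun x =>
          (aux13_hasDerivAt_fSlide hfd hgd x α).differentiableAt)).continuousOn
      · intro x hx
        rw [Metric.isOpen_ball.interior_eq] at hx
        rw [(aux13_hasDerivAt_fSlide hfd hgd x α).deriv]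
        exact (hS1 x α hx hαv₁).1
    -- strict monotonicity of g(·,0,α) near ∓a
    have SMOg1 : StrictMonoOn (fun u => g u 0 α) (Metric.ball (-a) ε) := by
      apply strictMonoOn_of_deriv_pos (convex_ball _ _)
      · exact (Differentiable.continuous (fun u =>
          (aux13_hasDerivAt_sliceX hgd u 0 α).differentiableAt)).continuousOn
      · intro x hx
        rw [Metric.isOpen_ball.interior_eq] at hx
        rw [(aux13_hasDerivAt_sliceX hgd x 0 α).deriv]
        exact (hS1 x α hx hαv₁).2.1
    have SMOg2 : StrictMonoOn (fun u => g u 0 α) (Metric.ball a ε) := by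
      apply strictMonoOn_of_deriv_pos (convex_ball _ _)
      · exact (Differentiable.continuous (fun u =>
          (aux13_hasDerivAt_sliceX hgd u 0 α).differentiableAt)).continuousOn
      · intro x hx
        rw [Metric.isOpen_ball.interior_eq] at hx
        rw [(aux13_hasDerivAt_sliceX hgd x 0 α).deriv]
        exact (hS2 x α hx hαv₂).2.1
    set l := min (-tm) (-tp) with hldef
    set r := max (-tm) (-tp) with hrdef
    have hlrne : -tm ≠ -tp := fun h => hne (neg_inj.1 h)
    have hlr : l < r := min_lt_max.2 hlrne
    have hlball : l ∈ Metric.ball (-a) ε := by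
      rcases le_total (-tm) (-tp) with h | h
      · rw [hldef, min_eq_left h]; exact hmb
      · rw [hldef, min_eq_right h]; exact hpb
    have hrball : r ∈ Metric.ball (-a) ε := by
      rcases le_total (-tm) (-tp) with h | h
      · rw [hrdef, max_eq_right h]; exact hpb
      · rw [hrdef, max_eq_left h]; exact hmb
    have hIoo : Set.Ioo l r ⊆ Metric.ball (-a) ε := by
      intro x hx
      rw [Real.ball_eq_Ioo] at hlball hrball ⊢
      exact ⟨lt_trans hlball.1 hx.1, lt_trans hx.2 hrball.2⟩
    have hgm0 : g (-tm) 0 α = 0 := hϑmz α hαU₀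
    have hgp0 : g tp 0 α = 0 := hϑpz α hαU₀
    have hFm : fSlide f g (-tm) α = -(g tm 0 α * f (-tm) 0 α) := by
      simp only [fSlide, neg_neg, hgm0]; ring
    have hFp : fSlide f g (-tp) α = g (-tp) 0 α * f tp 0 α := by
      simp only [fSlide, neg_neg, hgp0]; ring
    have hf_negtm : 0 < f (-tm) 0 α := (hS1 (-tm) α hmb hαv₁).2.2
    have hf_tp : 0 < f tp 0 α := (hS2 tp α htp hαv₂).2.2
    obtain ⟨hFl, hFr⟩ : fSlide f g l α < 0 ∧ 0 < fSlide f g r α := by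
      rcases lt_or_gt_of_ne hne with hcase | hcase
      · -- tm < tp, so l = -tp, r = -tm
        have hl : l = -tp := by rw [hldef, min_eq_right (neg_le_neg hcase.le)]
        have hr : r = -tm := by rw [hrdef, max_eq_left (neg_le_neg hcase.le)]
        have hgtm : g tm 0 α < 0 := by
          have := SMOg2 htm htp hcase
          simpa [hgp0] using this
        have hgntp : g (-tp) 0 α < 0 := by
          have := SMOg1 hpb hmb (neg_lt_neg hcase)
          simpa [hgm0] using this
        constructor
        · rw [hl, hFp]; exact mul_neg_of_neg_of_pos hgntp hf_tp
        · rw [hr, hFm]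
          have : g tm 0 α * f (-tm) 0 α < 0 := mul_neg_of_neg_of_pos hgtm hf_negtm
          linarith
      · -- tp < tm, so l = -tm, r = -tp
        have hl : l = -tm := by rw [hldef, min_eq_left (neg_le_neg hcase.le)]
        have hr : r = -tp := by rw [hrdef, max_eq_right (neg_le_neg hcase.le)]
        have hgtm : 0 < g tm 0 α := by
          have := SMOg2 htp htm hcase
          simpa [hgp0] using this
        have hgntp : 0 < g (-tp) 0 α := by
          have := SMOg1 hmb hpb (neg_lt_neg hcase)
          simpa [hgm0] using this
        constructor
        · rw [hl, hFm]
          have : 0 < g tm 0 α * f (-tm) 0 α := mul_pos hgtm hf_negtm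
          linarith
        · rw [hr, hFp]; exact mul_pos hgntp hf_tp
    have hmem : -(ϖ α) ∈ Set.Ioo l r := by
      constructor
      · rcases lt_trichotomy (-(ϖ α)) l with h | h | h
        · have := SMOF hϖnb hlball h
          simp only [hz] at this
          linarith
        · rw [← h] at hFl
          rw [hz] at hFl
          linarith
        · exact h
      · rcases lt_trichotomy r (-(ϖ α)) with h | h | h
        · have := SMOF hrball hϖnb h
          simp only [hz] at this
          linarith
        · rw [h] at hFr
          rw [hz] at hFr
          linarith
        · exact h
    refine ⟨hmem, hz, ?_, ?_⟩
    · intro x hx hx0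
      exact SMOF.injOn (hIoo hx) hϖnb (by rw [hx0, hz])
    · intro x hx
      rw [(aux13_hasDerivAt_fSlide hfd hgd x α).deriv]
      exact (hS1 x α (hIoo hx) hαv₁).1
end
end
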